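/- arXiv:1609.01460 — 3 statements merged into one kernel-verified Lean document; each statement's English description precedes it below -/
import Mathlib

section
/- Every column rewriting rule c_u c_v ⇒ c_w c_{w'} (where w, w' are the columns of the Schensted tableau P(uv) and (u,v) is not already a tableau) strictly decreases words with respect to the order ≪; hence the column rewriting system is terminating. -/
/-- A column over `{1,…,n}`: a nonempty strictly decreasing word. -/
def IsColumn (n : ℕ) (w : List ℕ) : Prop :=
  w ≠ [] ∧ w.Chain' (· > ·) ∧ ∀ x ∈ w, 1 ≤ x ∧ x ≤ n

/-- Schensted row insertion of a letter into a row: replace the leftmost entry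
greater than `y` by `y` and bump it, or append `y` at the end of the row. -/
def rowInsert (row : List ℕ) (y : ℕ) : List ℕ × Option ℕ :=
  let j := row.findIdx (fun x => decide (y < x))
  if h : j < row.length then (row.set j y, some (row.get ⟨j, h⟩))
  else (row ++ [y], none)

/-- Schensted insertion of a letter into a tableau (given as its list of rows,
from top to bottom). -/
def tabInsert : List (List ℕ) → ℕ → List (List ℕ)
  | [], y => [[y]]
  | r :: rest, y =>
    match rowInsert r y with
    | (r', none) => r' :: rest
    | (r', some z) => r' :: tabInsert rest z

/-- The Schensted tableau `P(w)` of a word `w`, as a list of rows. -/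
def Schensted (w : List ℕ) : List (List ℕ) := w.foldl tabInsert []

/-- The left column of a tableau, read bottom to top (a decreasing word). -/
def leftCol (t : List (List ℕ)) : List ℕ := (t.map (fun r => r.headD 0)).reverse

/-- The right column of a (two-column) tableau, read bottom to top. -/
def rightCol (t : List (List ℕ)) : List ℕ := (t.filterMap (fun r => r[1]?)).reverse

/-- The word over column generators determined by a tableau with at most two
columns. -/
def outCols (t : List (List ℕ)) : List (List ℕ) :=
  if rightCol t = [] then [leftCol t] else [leftCol t, rightCol t]

/-- Two columns `u = x_p…x_1`, `v = y_q…y_1` form a tableau configuration when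
`q ≤ p` and `x_i ≤ y_i` for all `i ≤ q`. -/
def TabPair (u v : List ℕ) : Prop :=
  v.length ≤ u.length ∧ ∀ i, i < v.length → u.reverse.getD i 0 ≤ v.reverse.getD i 0

/-- The strict order `≺_rev` on columns. -/
def RevLt (u v : List ℕ) : Prop :=
  v.length < u.length ∨ (u.length = v.length ∧ List.Lex (· < ·) u v)

/-- The order `≪` on words over column generators. -/
def ColWordLt (w w' : List (List ℕ)) : Prop :=
  w.length < w'.length ∨ (w.length = w'.length ∧
    ∃ i, i < w.length ∧ RevLt (w.getD i []) (w'.getD i []) ∧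
      ∀ j, j < i → w.getD j [] = w'.getD j [])

/-- One step of the column rewriting system: replace an adjacent non-tableau
pair of columns `c_u c_v` by the columns of the Schensted tableau `P(uv)`. -/
def ColStep (n : ℕ) (w w' : List (List ℕ)) : Prop :=
  ∃ a b u v, IsColumn n u ∧ IsColumn n v ∧ ¬ TabPair u v ∧
    w = a ++ [u, v] ++ b ∧ w' = a ++ outCols (Schensted (u ++ v)) ++ b

namespace ColProof

def fst0 (r : List ℕ) : ℕ := r.headD 0

def RowOK : List ℕ → Prop
  | [_] => True
  | [a, b] => a ≤ b
  | _ => False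

def ColOK : List ℕ → List ℕ → Prop
  | [a], [a'] => a < a'
  | [a, _], [a'] => a < a'
  | [a, b], [a', b'] => a < a' ∧ b < b'
  | _, _ => False

def Good (t : List (List ℕ)) : Prop := (∀ r ∈ t, RowOK r) ∧ t.Chain' ColOK

lemma rowOK_cases {r : List ℕ} (h : RowOK r) :
    (∃ a, r = [a]) ∨ ∃ a b, r = [a, b] ∧ a ≤ b := by
  match r with
  | [a] => exact Or.inl ⟨a, rfl⟩
  | [a, b] => exact Or.inr ⟨a, b, rfl, h⟩
  | [] => exact absurd h (by simp [RowOK])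
  | a :: b :: c :: l => exact absurd h (by simp [RowOK])

lemma rowInsert_single_lt {a y : ℕ} (h : y < a) : rowInsert [a] y = ([y], some a) := by
  simp [rowInsert, List.findIdx_cons, h]

lemma rowInsert_single_ge {a y : ℕ} (h : a ≤ y) : rowInsert [a] y = ([a, y], none) := by
  simp [rowInsert, List.findIdx_cons, Nat.not_lt.2 h]

lemma rowInsert_pair_lt {a b y : ℕ} (h : y < a) : rowInsert [a, b] y = ([y, b], some a) := by
  simp [rowInsert, List.findIdx_cons, h]

lemma rowInsert_pair_mid {a b y : ℕ} (h1 : a ≤ y) (h2 : y < b) :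
    rowInsert [a, b] y = ([a, y], some b) := by
  simp [rowInsert, List.findIdx_cons, Nat.not_lt.2 h1, h2]

lemma tabInsert_cons (r : List ℕ) (rest : List (List ℕ)) (y : ℕ) :
    tabInsert (r :: rest) y =
      match rowInsert r y with
      | (r', none) => r' :: rest
      | (r', some z) => r' :: tabInsert rest z := rfl

end ColProof
namespace ColProof

lemma head?_tabInsert_cons (r2 : List ℕ) (rest2 : List (List ℕ)) (z : ℕ) :
    (tabInsert (r2 :: rest2) z).head? = some (rowInsert r2 z).1 := by
  rw [tabInsert_cons]
  rcases h : rowInsert r2 z with ⟨r', o⟩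
  cases o <;> simp

lemma good_tail {r : List ℕ} {rest : List (List ℕ)} (hG : Good (r :: rest)) : Good rest :=
  ⟨fun s hs => hG.1 s (List.mem_cons_of_mem _ hs), hG.2.tail⟩

lemma insert_main : ∀ (T : List (List ℕ)) (y : ℕ), Good T →
    (∀ b, (T.headD [])[1]? = some b → y < b) →
    Good (tabInsert T y)
    ∧ T.length ≤ (tabInsert T y).length
    ∧ (∀ i, i < T.length → fst0 ((tabInsert T y).getD i []) ≤ fst0 (T.getD i []))
    ∧ (tabInsert T y).flatten.Perm (y :: T.flatten)
    ∧ (((tabInsert T y).headD [])[1]? = (T.headD [])[1]? ∨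
       (((tabInsert T y).headD [])[1]? = some y ∧ fst0 (T.headD []) ≤ y)) := by
  intro T
  induction T with
  | nil =>
    intro y _ _
    refine ⟨⟨?_, ?_⟩, ?_, ?_, ?_, ?_⟩ <;> simp [tabInsert, RowOK, fst0, List.Chain']
  | cons r rest IH =>
    intro y hG hsec
    have hGrest : Good rest := good_tail hG
    have hcr : ∀ s ∈ rest.head?, ColOK r s := (List.isChain_cons.1 hG.2).1
    rcases rowOK_cases (hG.1 r (List.mem_cons_self)) with ⟨a, rfl⟩ | ⟨a, b, rfl, hab⟩
    · -- r = [a]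
      by_cases hy : y < a
      · -- bump a
        have heq : tabInsert ([a] :: rest) y = [y] :: tabInsert rest a := by
          rw [tabInsert_cons, rowInsert_single_lt hy]
        have hsec' : ∀ b2, (rest.headD [])[1]? = some b2 → a < b2 := by
          intro b2 hb2
          match rest, hb2 with
          | r2 :: rest2, hb2 =>
            have hc2 := hcr r2 rfl
            rcases rowOK_cases (hGrest.1 r2 (List.mem_cons_self)) with
              ⟨a2, rfl⟩ | ⟨a2, b2', rfl, _⟩
            · simp at hb2
            · exact absurd hc2 (by simp [ColOK])
        obtain ⟨iG, iLen, iPw, iPerm, iSec⟩ := IH a hGrest hsec'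
        have hhead : ∀ s ∈ (tabInsert rest a).head?, ColOK [y] s := by
          intro s hs
          match rest, hs with
          | [], hs => simp [tabInsert] at hs; subst hs; simpa [ColOK] using hy
          | r2 :: rest2, hs =>
            rw [head?_tabInsert_cons] at hs
            have hc2 := hcr r2 rfl
            rcases rowOK_cases (hGrest.1 r2 (List.mem_cons_self)) with
              ⟨a2, rfl⟩ | ⟨a2, b2, rfl, _⟩
            · have ha2 : a < a2 := by simpa [ColOK] using hc2
              rw [rowInsert_single_lt ha2] at hs
              simp at hs; subst hs; simpa [ColOK] using hy
            · exact absurd hc2 (by simp [ColOK])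
        refine ⟨⟨?_, ?_⟩, ?_, ?_, ?_, ?_⟩
        · intro s hs
          rw [heq] at hs
          rcases List.mem_cons.1 hs with rfl | hs
          · simp [RowOK]
          · exact iG.1 s hs
        · rw [heq]; exact List.isChain_cons.2 ⟨hhead, iG.2⟩
        · rw [heq]; simpa using Nat.succ_le_succ iLen
        · intro i hi
          rw [heq]
          cases i with
          | zero => simpa [fst0] using hy.le
          | succ i => exact iPw i (by simpa using hi)
        · rw [heq]
          exact iPerm.cons y
        · left; rw [heq]; simp
      · -- append y to [a]
        push_neg at hy
        have heq : tabInsert ([a] :: rest) y = [a, y] :: rest := by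
          rw [tabInsert_cons, rowInsert_single_ge hy]
        refine ⟨⟨?_, ?_⟩, ?_, ?_, ?_, ?_⟩
        · intro s hs
          rw [heq] at hs
          rcases List.mem_cons.1 hs with rfl | hs
          · simpa [RowOK] using hy
          · exact hG.1 s (List.mem_cons_of_mem _ hs)
        · rw [heq]
          refine List.isChain_cons.2 ⟨?_, hG.2.tail⟩
          intro s hs
          have hc2 := hcr s hs
          have hsmem : s ∈ rest := by
            cases rest with
            | nil => simp at hs
            | cons r2 rest2 => simp at hs; subst hs; exact List.mem_cons_self
          rcases rowOK_cases (hGrest.1 s hsmem) with ⟨a2, rfl⟩ | ⟨a2, b2, rfl, _⟩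
          · simpa [ColOK] using (by simpa [ColOK] using hc2 : a < a2)
          · exact absurd hc2 (by simp [ColOK])
        · rw [heq]; simp
        · intro i hi
          rw [heq]
          cases i with
          | zero => simp [fst0]
          | succ i => simp
        · rw [heq]
          exact List.Perm.swap y a _
        · right; rw [heq]; exact ⟨by simp, by simpa [fst0] using hy⟩
    · -- r = [a, b]
      have hyb : y < b := hsec b (by simp)
      by_cases hy : y < a
      · -- bump a
        have heq : tabInsert ([a, b] :: rest) y = [y, b] :: tabInsert rest a := by
          rw [tabInsert_cons, rowInsert_pair_lt hy]
        have hsec' : ∀ b2, (rest.headD [])[1]? = some b2 → a < b2 := by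
          intro b2 hb2
          match rest, hb2 with
          | r2 :: rest2, hb2 =>
            have hc2 := hcr r2 rfl
            rcases rowOK_cases (hGrest.1 r2 (List.mem_cons_self)) with
              ⟨a2, rfl⟩ | ⟨a2, b2', rfl, _⟩
            · simp at hb2
            · have : a < a2 ∧ b < b2' := by simpa [ColOK] using hc2
              simp at hb2; subst hb2
              exact lt_of_le_of_lt hab this.2
        obtain ⟨iG, iLen, iPw, iPerm, iSec⟩ := IH a hGrest hsec'
        have hhead : ∀ s ∈ (tabInsert rest a).head?, ColOK [y, b] s := by
          intro s hs
          match rest, hs with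
          | [], hs => simp [tabInsert] at hs; subst hs; simpa [ColOK] using hy
          | r2 :: rest2, hs =>
            rw [head?_tabInsert_cons] at hs
            have hc2 := hcr r2 rfl
            rcases rowOK_cases (hGrest.1 r2 (List.mem_cons_self)) with
              ⟨a2, rfl⟩ | ⟨a2, b2, rfl, _⟩
            · have ha2 : a < a2 := by simpa [ColOK] using hc2
              rw [rowInsert_single_lt ha2] at hs
              simp at hs; subst hs; simpa [ColOK] using hy
            · have hc2' : a < a2 ∧ b < b2 := by simpa [ColOK] using hc2
              rw [rowInsert_pair_lt hc2'.1] at hs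
              simp at hs; subst hs
              simp [ColOK]; exact ⟨hy, hc2'.2⟩
        refine ⟨⟨?_, ?_⟩, ?_, ?_, ?_, ?_⟩
        · intro s hs
          rw [heq] at hs
          rcases List.mem_cons.1 hs with rfl | hs
          · simpa [RowOK] using hyb.le
          · exact iG.1 s hs
        · rw [heq]; exact List.isChain_cons.2 ⟨hhead, iG.2⟩
        · rw [heq]; simpa using Nat.succ_le_succ iLen
        · intro i hi
          rw [heq]
          cases i with
          | zero => simpa [fst0] using hy.le
          | succ i => exact iPw i (by simpa using hi)
        · rw [heq]
          exact ((iPerm.cons b).trans (List.Perm.swap a b _)).cons y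
        · left; rw [heq]; simp
      · -- bump b
        push_neg at hy
        have heq : tabInsert ([a, b] :: rest) y = [a, y] :: tabInsert rest b := by
          rw [tabInsert_cons, rowInsert_pair_mid hy hyb]
        have hsec' : ∀ b2, (rest.headD [])[1]? = some b2 → b < b2 := by
          intro b2 hb2
          match rest, hb2 with
          | r2 :: rest2, hb2 =>
            have hc2 := hcr r2 rfl
            rcases rowOK_cases (hGrest.1 r2 (List.mem_cons_self)) with
              ⟨a2, rfl⟩ | ⟨a2, b2', rfl, _⟩
            · simp at hb2
            · have : a < a2 ∧ b < b2' := by simpa [ColOK] using hc2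
              simp at hb2; subst hb2
              exact this.2
        obtain ⟨iG, iLen, iPw, iPerm, iSec⟩ := IH b hGrest hsec'
        have hhead : ∀ s ∈ (tabInsert rest b).head?, ColOK [a, y] s := by
          intro s hs
          match rest, hs with
          | [], hs =>
            simp [tabInsert] at hs; subst hs
            simpa [ColOK] using lt_of_le_of_lt hy hyb
          | r2 :: rest2, hs =>
            rw [head?_tabInsert_cons] at hs
            have hc2 := hcr r2 rfl
            rcases rowOK_cases (hGrest.1 r2 (List.mem_cons_self)) with
              ⟨a2, rfl⟩ | ⟨a2, b2, rfl, _⟩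
            · have ha2 : a < a2 := by simpa [ColOK] using hc2
              by_cases hba : b < a2
              · rw [rowInsert_single_lt hba] at hs
                simp at hs; subst hs
                simpa [ColOK] using lt_of_le_of_lt hy hyb
              · rw [rowInsert_single_ge (Nat.not_lt.1 hba)] at hs
                simp at hs; subst hs
                simp [ColOK]; exact ⟨ha2, hyb⟩
            · have hc2' : a < a2 ∧ b < b2 := by simpa [ColOK] using hc2
              by_cases hba : b < a2
              · rw [rowInsert_pair_lt hba] at hs
                simp at hs; subst hs
                simp [ColOK]
                exact ⟨lt_of_le_of_lt hy hyb, lt_trans hyb hc2'.2⟩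
              · rw [rowInsert_pair_mid (Nat.not_lt.1 hba) hc2'.2] at hs
                simp at hs; subst hs
                simp [ColOK]; exact ⟨hc2'.1, hyb⟩
        refine ⟨⟨?_, ?_⟩, ?_, ?_, ?_, ?_⟩
        · intro s hs
          rw [heq] at hs
          rcases List.mem_cons.1 hs with rfl | hs
          · simpa [RowOK] using hy
          · exact iG.1 s hs
        · rw [heq]; exact List.isChain_cons.2 ⟨hhead, iG.2⟩
        · rw [heq]; simpa using Nat.succ_le_succ iLen
        · intro i hi
          rw [heq]
          cases i with
          | zero => simp [fst0]
          | succ i => exact iPw i (by simpa using hi)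
        · rw [heq]
          exact ((iPerm.cons y).cons a).trans (List.Perm.swap y a _)
        · right; rw [heq]; exact ⟨by simp, by simpa [fst0] using hy⟩

end ColProof
namespace ColProof

lemma foldl_main : ∀ (v : List ℕ) (T : List (List ℕ)), Good T → v.Chain' (· > ·) →
    (∀ y ∈ v, ∀ b, (T.headD [])[1]? = some b → y < b) →
    Good (List.foldl tabInsert T v)
    ∧ T.length ≤ (List.foldl tabInsert T v).length
    ∧ (∀ i, i < T.length → fst0 ((List.foldl tabInsert T v).getD i []) ≤ fst0 (T.getD i []))
    ∧ (List.foldl tabInsert T v).flatten.Perm (v ++ T.flatten) := by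
  intro v
  induction v with
  | nil => intro T hG _ _; exact ⟨hG, le_refl _, fun i _ => le_refl _, by simp⟩
  | cons y v' IH =>
    intro T hG hch hsec
    obtain ⟨iG, iLen, iPw, iPerm, iSec⟩ :=
      insert_main T y hG (hsec y (List.mem_cons_self))
    have hlt : ∀ z ∈ v', z < y := by
      have hpair := List.isChain_iff_pairwise.1 hch
      intro z hz
      exact (List.pairwise_cons.1 hpair).1 z hz
    have hsec1 : ∀ z ∈ v', ∀ b, ((tabInsert T y).headD [])[1]? = some b → z < b := by
      intro z hz b hb
      rcases iSec with h | ⟨h, _⟩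
      · exact hsec z (List.mem_cons_of_mem _ hz) b (h ▸ hb)
      · rw [h] at hb
        obtain rfl : y = b := by injection hb
        exact hlt z hz
    obtain ⟨jG, jLen, jPw, jPerm⟩ := IH (tabInsert T y) iG hch.tail hsec1
    refine ⟨jG, le_trans iLen jLen, ?_, ?_⟩
    · intro i hi
      exact le_trans (jPw i (lt_of_lt_of_le hi iLen)) (iPw i hi)
    · show (List.foldl tabInsert (tabInsert T y) v').flatten.Perm _
      refine jPerm.trans ?_
      refine (List.Perm.append_left v' iPerm).trans ?_
      exact List.perm_middle

lemma tabInsert_col : ∀ (l : List ℕ) (y : ℕ), List.Chain' (· < ·) (y :: l) →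
    tabInsert (l.map (fun x => [x])) y = (y :: l).map (fun x => [x]) := by
  intro l
  induction l with
  | nil => intro y _; rfl
  | cons z t IHl =>
    intro y h
    have hyz : y < z := (List.isChain_cons_cons.1 h).1
    show tabInsert ([z] :: t.map (fun x => [x])) y = _
    rw [tabInsert_cons, rowInsert_single_lt hyz]
    show [y] :: tabInsert (t.map (fun x => [x])) z = _
    rw [IHl z (List.isChain_cons_cons.1 h).2]
    rfl

lemma schensted_aux : ∀ (u l : List ℕ), List.Chain' (· > ·) u → List.Chain' (· < ·) l →
    (∀ a ∈ u, ∀ b ∈ l, a < b) →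
    List.foldl tabInsert (l.map (fun x => [x])) u = ((u.reverse) ++ l).map (fun x => [x]) := by
  intro u
  induction u with
  | nil => intro l _ _ _; simp
  | cons y t IHu =>
    intro l hu hl hcross
    have h1 : List.Chain' (· < ·) (y :: l) :=
      List.isChain_cons.2
        ⟨fun b hb => hcross y (List.mem_cons_self) b (List.mem_of_mem_head? hb), hl⟩
    have hyt : ∀ a ∈ t, a < y := by
      have hpair := List.isChain_iff_pairwise.1 hu
      intro a ha
      exact (List.pairwise_cons.1 hpair).1 a ha
    rw [List.foldl_cons, tabInsert_col l y h1]
    rw [IHu (y :: l) hu.tail h1 ?_]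
    · congr 1
      simp
    · intro a ha b hb
      rcases List.mem_cons.1 hb with rfl | hb
      · exact hyt a ha
      · exact hcross a (List.mem_cons_of_mem _ ha) b hb

lemma schensted_column {u : List ℕ} (hu : List.Chain' (· > ·) u) :
    Schensted u = u.reverse.map (fun x => [x]) := by
  have h := schensted_aux u [] hu (by simp [List.Chain']) (by simp)
  simpa [Schensted] using h

lemma good_map_singleton {l : List ℕ} (hl : List.Chain' (· < ·) l) :
    Good (l.map fun x => [x]) := by
  constructor
  · intro r hr
    simp only [List.mem_map] at hr
    obtain ⟨x, _, rfl⟩ := hr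
    simp [RowOK]
  · simp only [List.Chain', List.isChain_map]
    exact hl.imp fun {a b} h => by simpa [ColOK] using h

lemma flatten_map_singleton : ∀ l : List ℕ, (l.map fun x => [x]).flatten = l := by
  intro l; induction l with
  | nil => rfl
  | cons a t IH => simp [IH]

lemma secs_nil_of_head1 : ∀ (t : List (List ℕ)), Good t → (∀ r ∈ t.head?, r.length ≤ 1) →
    t.filterMap (fun r => r[1]?) = [] := by
  intro t
  induction t with
  | nil => simp
  | cons r rest IHt =>
    intro hG hh
    have hr1 : r.length ≤ 1 := hh r rfl
    rcases rowOK_cases (hG.1 r (List.mem_cons_self)) with ⟨a, rfl⟩ | ⟨a, b, rfl, _⟩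
    · rw [List.filterMap_cons]
      simp only [List.getElem?_cons_succ, List.getElem?_nil]
      apply IHt (good_tail hG)
      intro r2 hr2
      have hmem : r2 ∈ rest := List.mem_of_mem_head? hr2
      have hc2 : ColOK [a] r2 := (List.isChain_cons.1 hG.2).1 r2 hr2
      rcases rowOK_cases ((good_tail hG).1 r2 hmem) with ⟨a2, rfl⟩ | ⟨a2, b2, rfl, _⟩
      · simp
      · exact absurd hc2 (by simp [ColOK])
    · simp at hr1

lemma secs_facts : ∀ (t : List (List ℕ)), Good t →
    List.Chain' (· < ·) (t.filterMap (fun r => r[1]?)) ∧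
    (∀ i, i < (t.filterMap (fun r => r[1]?)).length →
      (t.getD i []).length = 2 ∧
        (t.getD i []).getD 1 0 = (t.filterMap (fun r => r[1]?)).getD i 0) := by
  intro t
  induction t with
  | nil => simp [List.Chain']
  | cons r rest IHt =>
    intro hG
    obtain ⟨ch, idx⟩ := IHt (good_tail hG)
    rcases rowOK_cases (hG.1 r (List.mem_cons_self)) with ⟨a, rfl⟩ | ⟨a, b, rfl, _⟩
    · have hnil : ([a] :: rest).filterMap (fun r => r[1]?) = [] := by
        apply secs_nil_of_head1 _ hG
        intro s hs
        obtain rfl : [a] = s := by simpa using hs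
        simp
      rw [hnil]
      exact ⟨List.isChain_nil, fun i hi => absurd hi (by simp)⟩
    · have heq : (([a, b] :: rest)).filterMap (fun r => r[1]?)
          = b :: rest.filterMap (fun r => r[1]?) := by
        rw [List.filterMap_cons]
        simp
      rw [heq]
      constructor
      · refine List.isChain_cons.2 ⟨?_, ch⟩
        intro s hs
        match rest, hs with
        | r2 :: rest2, hs =>
          have hc2 : ColOK [a, b] r2 := (List.isChain_cons.1 hG.2).1 r2 rfl
          rcases rowOK_cases ((good_tail hG).1 r2 (List.mem_cons_self)) with
            ⟨a2, rfl⟩ | ⟨a2, b2, rfl, _⟩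
          · exfalso
            have hnil2 : (([a2] :: rest2)).filterMap (fun r => r[1]?) = [] := by
              apply secs_nil_of_head1 _ (good_tail hG)
              intro s2 hs2
              obtain rfl : [a2] = s2 := by simpa using hs2
              simp
            rw [hnil2] at hs
            simp at hs
          · have hc2' : a < a2 ∧ b < b2 := by simpa [ColOK] using hc2
            have : s = b2 := by
              rw [List.filterMap_cons] at hs
              simp at hs
              exact hs.symm
            subst this
            exact hc2'.2
      · intro i hi
        cases i with
        | zero => simp
        | succ i =>
          simp only [List.getD_cons_succ]
          exact idx i (by simpa using hi)

lemma lex_of_forall₂ : ∀ {l l' : List ℕ}, List.Forall₂ (· ≤ ·) l l' → l ≠ l' →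
    List.Lex (· < ·) l l' := by
  intro l l' h
  induction h with
  | nil => intro h; exact absurd rfl h
  | @cons a b l₁ l₂ hab htl IH =>
    intro hne
    rcases lt_or_eq_of_le hab with h | rfl
    · exact List.Lex.rel h
    · refine List.Lex.cons (IH ?_)
      intro h
      exact hne (by rw [h])

lemma forall₂_of_pointwise : ∀ (l l' : List ℕ), l.length = l'.length →
    (∀ i, i < l.length → l.getD i 0 ≤ l'.getD i 0) → List.Forall₂ (· ≤ ·) l l' := by
  intro l
  induction l with
  | nil =>
    intro l' hl _
    obtain rfl : l' = [] := by simpa using (List.length_eq_zero_iff.1 hl.symm)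
    exact List.Forall₂.nil
  | cons a t IH =>
    intro l' hl hp
    match l' with
    | b :: t' =>
      refine List.Forall₂.cons (by simpa using hp 0 (by simp)) (IH t' (by simpa using hl) ?_)
      intro i hi
      simpa using hp (i + 1) (by simpa using Nat.succ_lt_succ hi)

end ColProof
namespace ColProof

lemma schensted_facts {n : ℕ} {u v : List ℕ} (hu : IsColumn n u) (hv : IsColumn n v) :
    Good (Schensted (u ++ v))
    ∧ u.length ≤ (Schensted (u ++ v)).length
    ∧ (∀ i, i < u.length → fst0 ((Schensted (u ++ v)).getD i []) ≤ u.reverse.getD i 0)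
    ∧ (Schensted (u ++ v)).flatten.Perm (v ++ u.reverse) := by
  have hT0 : Schensted u = u.reverse.map (fun x => [x]) := schensted_column hu.2.1
  have hrevch : List.Chain' (· < ·) u.reverse := List.isChain_reverse.mpr hu.2.1
  have hG0 : Good (u.reverse.map (fun x => [x])) := good_map_singleton hrevch
  have hsec0 : ∀ y ∈ v, ∀ b, ((u.reverse.map (fun x => [x])).headD [])[1]? = some b → y < b := by
    intro y _ b hb
    exfalso
    rcases hur : u.reverse with _ | ⟨x, l⟩
    · exact hu.1 (List.reverse_eq_nil_iff.1 hur)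
    · rw [hur] at hb
      simp at hb
  have h1 : Schensted (u ++ v) = List.foldl tabInsert (u.reverse.map (fun x => [x])) v := by
    rw [Schensted, List.foldl_append, ← Schensted, hT0]
  obtain ⟨jG, jLen, jPw, jPerm⟩ := foldl_main v _ hG0 hv.2.1 hsec0
  rw [h1]
  refine ⟨jG, by simpa using jLen, ?_, ?_⟩
  · intro i hi
    have hi' : i < (u.reverse.map (fun x => [x])).length := by simpa using hi
    have h2 := jPw i hi'
    have h3 : (u.reverse.map (fun x => [x])).getD i [] = [u.reverse.getD i 0] := by
      rw [List.getD_eq_getElem _ _ hi', List.getElem_map,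
        List.getD_eq_getElem _ _ (by simpa using hi)]
    rw [h3] at h2
    exact h2
  · refine jPerm.trans ?_
    rw [flatten_map_singleton]

lemma flatten_split : ∀ t : List (List ℕ), (∀ r ∈ t, RowOK r) →
    t.flatten.Perm ((t.map fun r => r.headD 0) ++ t.filterMap (fun r => r[1]?)) := by
  intro t
  induction t with
  | nil => simp
  | cons r rest IH =>
    intro h
    have IH' := IH (fun s hs => h s (List.mem_cons_of_mem _ hs))
    rcases rowOK_cases (h r (List.mem_cons_self)) with ⟨a, rfl⟩ | ⟨a, b, rfl, _⟩
    · show (a :: rest.flatten).Perm _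
      have hfm : (([a] :: rest)).filterMap (fun r => r[1]?) = rest.filterMap (fun r => r[1]?) := by
        rw [List.filterMap_cons]; simp
      rw [hfm]
      exact IH'.cons a
    · show (a :: b :: rest.flatten).Perm _
      have hfm : (([a, b] :: rest)).filterMap (fun r => r[1]?)
          = b :: rest.filterMap (fun r => r[1]?) := by
        rw [List.filterMap_cons]; simp
      rw [hfm]
      refine List.Perm.cons a ?_
      exact (IH'.cons b).trans List.perm_middle.symm

lemma tabpair_of_leftCol_eq {n : ℕ} {u v : List ℕ} (hu : IsColumn n u) (hv : IsColumn n v)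
    (hL : leftCol (Schensted (u ++ v)) = u) : TabPair u v := by
  obtain ⟨hG, hlen, _, hperm⟩ := schensted_facts hu hv
  set T := Schensted (u ++ v) with hT
  have hfirsts : T.map (fun r => r.headD 0) = u.reverse := by
    have h := congrArg List.reverse hL
    rw [leftCol] at h
    simpa using h
  have hsplit := flatten_split T hG.1
  rw [hfirsts] at hsplit
  have hp1 : (u.reverse ++ v).Perm (u.reverse ++ T.filterMap (fun r => r[1]?)) := by
    refine (List.perm_append_comm.trans ?_).trans hsplit
    exact hperm.symm
  have hsecv : (T.filterMap (fun r => r[1]?)).Perm v.reverse :=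
    ((List.perm_append_left_iff _).1 hp1).symm.trans (List.reverse_perm v).symm
  obtain ⟨hch, hidx⟩ := secs_facts T hG
  haveI : IsAntisymm ℕ (· < ·) := ⟨fun a b h h' => absurd (lt_trans h h') (lt_irrefl a)⟩
  have hsort1 : List.Pairwise (· < ·) (T.filterMap (fun r => r[1]?)) :=
    List.isChain_iff_pairwise.1 hch
  have hsort2 : List.Pairwise (· < ·) v.reverse := by
    rw [List.pairwise_reverse]
    exact List.isChain_iff_pairwise.1 hv.2.1
  have hsec_eq : T.filterMap (fun r => r[1]?) = v.reverse :=
    List.Perm.eq_of_pairwise' hsort1 hsort2 hsecv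
  have hTlen : T.length = u.length := by
    have := congrArg List.length hfirsts
    simpa using this
  have hqp : v.length ≤ u.length := by
    have h1 : (T.filterMap (fun r => r[1]?)).length ≤ T.length :=
      List.length_filterMap_le _ _
    rw [hsec_eq] at h1
    simpa [hTlen] using h1
  refine ⟨hqp, ?_⟩
  intro i hi
  have hisec : i < (T.filterMap (fun r => r[1]?)).length := by
    rw [hsec_eq]; simpa using hi
  obtain ⟨hrow2, hrowval⟩ := hidx i hisec
  have hiT : i < T.length := lt_of_lt_of_le hi (hTlen ▸ hqp)
  have hrowmem : T.getD i [] ∈ T := by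
    rw [List.getD_eq_getElem _ _ hiT]
    exact List.getElem_mem _
  rcases rowOK_cases (hG.1 _ hrowmem) with ⟨a, ha⟩ | ⟨a, b, hab, haleb⟩
  · rw [ha] at hrow2; simp at hrow2
  · have h1 : u.reverse.getD i 0 = (T.getD i []).headD 0 := by
      rw [← hfirsts, List.getD_eq_getElem _ _ (by simpa [hTlen] using hiT : i < (T.map (fun r => r.headD 0)).length),
        List.getElem_map, List.getD_eq_getElem _ _ hiT]
    have h2 : v.reverse.getD i 0 = (T.getD i []).getD 1 0 := by
      rw [← hsec_eq, hrowval]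
    rw [h1, h2, hab]
    simpa using haleb

theorem main_dec {n : ℕ} {u v : List ℕ} (hu : IsColumn n u) (hv : IsColumn n v)
    (hnt : ¬ TabPair u v) : ColWordLt (outCols (Schensted (u ++ v))) [u, v] := by
  by_cases hR : rightCol (Schensted (u ++ v)) = []
  · left
    simp [outCols, hR]
  · right
    rw [outCols, if_neg hR]
    refine ⟨rfl, 0, by norm_num, ?_, fun j hj => absurd hj (Nat.not_lt_zero j)⟩
    simp only [List.getD_cons_zero]
    have hLne : leftCol (Schensted (u ++ v)) ≠ u := fun h => hnt (tabpair_of_leftCol_eq hu hv h)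
    obtain ⟨hG, hlen, hpw, _⟩ := schensted_facts hu hv
    have hlenL : (leftCol (Schensted (u ++ v))).length = (Schensted (u ++ v)).length := by
      simp [leftCol]
    rcases lt_or_eq_of_le hlen with h | h
    · exact Or.inl (by rw [hlenL]; exact h)
    · right
      refine ⟨by rw [hlenL, ← h], ?_⟩
      refine lex_of_forall₂ ?_ hLne
      have hf : List.Forall₂ (· ≤ ·) ((Schensted (u ++ v)).map (fun r => r.headD 0)) u.reverse := by
        apply forall₂_of_pointwise
        · simp [← h]
        · intro i hi
          have hi' : i < u.length := by simpa [← h] using hi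
          have hiT : i < (Schensted (u ++ v)).length := by simpa using hi
          have hg : ((Schensted (u ++ v)).map (fun r => r.headD 0)).getD i 0
              = fst0 ((Schensted (u ++ v)).getD i []) := by
            rw [List.getD_eq_getElem _ _ hi, List.getElem_map, List.getD_eq_getElem _ _ hiT]
            rfl
          rw [hg]
          exact hpw i hi'
      have := List.forall₂_reverse_iff.2 hf
      rw [List.reverse_reverse] at this
      exact this

end ColProof
namespace ColProof

lemma firsts_chain : ∀ t : List (List ℕ), Good t →
    List.Chain' (· < ·) (t.map (fun r => r.headD 0)) := by
  intro t
  induction t with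
  | nil => simp [List.Chain']
  | cons r rest IH =>
    intro hG
    refine List.isChain_cons.2 ⟨?_, IH (good_tail hG)⟩
    intro s hs
    match rest, hs with
    | r2 :: rest2, hs =>
      obtain rfl : s = r2.headD 0 := by simpa using hs.symm
      have hc2 : ColOK r r2 := (List.isChain_cons.1 hG.2).1 r2 rfl
      rcases rowOK_cases (hG.1 r (List.mem_cons_self)) with ⟨a, rfl⟩ | ⟨a, b, rfl, _⟩ <;>
        rcases rowOK_cases ((good_tail hG).1 r2 (List.mem_cons_self)) with
          ⟨a2, rfl⟩ | ⟨a2, b2, rfl, _⟩ <;>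
        simp [ColOK] at hc2 ⊢ <;> omega

lemma mem_flatten_of_first {t : List (List ℕ)} (hG : Good t) {x : ℕ}
    (hx : x ∈ t.map (fun r => r.headD 0)) : x ∈ t.flatten := by
  simp only [List.mem_map] at hx
  obtain ⟨r, hr, rfl⟩ := hx
  rcases rowOK_cases (hG.1 r hr) with ⟨a, rfl⟩ | ⟨a, b, rfl, _⟩ <;>
    exact List.mem_flatten.2 ⟨_, hr, by simp⟩

lemma mem_flatten_of_sec {t : List (List ℕ)} {x : ℕ}
    (hx : x ∈ t.filterMap (fun r => r[1]?)) : x ∈ t.flatten := by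
  simp only [List.mem_filterMap] at hx
  obtain ⟨r, hr, hx⟩ := hx
  exact List.mem_flatten.2 ⟨r, hr, List.mem_of_getElem? hx⟩

lemma out_cols_columns {n : ℕ} {u v : List ℕ} (hu : IsColumn n u) (hv : IsColumn n v) :
    IsColumn n (leftCol (Schensted (u ++ v))) ∧
    (rightCol (Schensted (u ++ v)) ≠ [] → IsColumn n (rightCol (Schensted (u ++ v)))) := by
  obtain ⟨hG, hlen, hpw, hperm⟩ := schensted_facts hu hv
  have hbound : ∀ x ∈ (Schensted (u ++ v)).flatten, 1 ≤ x ∧ x ≤ n := by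
    intro x hx
    have hx' : x ∈ v ++ u.reverse := hperm.mem_iff.1 hx
    rcases List.mem_append.1 hx' with h | h
    · exact hv.2.2 x h
    · exact hu.2.2 x (List.mem_reverse.1 h)
  constructor
  · refine ⟨?_, ?_, ?_⟩
    · intro h
      have h0 : (Schensted (u ++ v)).length = 0 := by
        have := congrArg List.length h
        simpa [leftCol] using this
      have : 0 < u.length := List.length_pos_iff.2 hu.1
      omega
    · simp only [leftCol, List.Chain', List.isChain_reverse]
      exact (firsts_chain _ hG).imp fun {a b} hab => hab
    · intro x hx
      rw [leftCol, List.mem_reverse] at hx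
      exact hbound x (mem_flatten_of_first hG hx)
  · intro hne
    refine ⟨hne, ?_, ?_⟩
    · simp only [rightCol, List.Chain', List.isChain_reverse]
      exact ((secs_facts _ hG).1).imp fun {a b} hab => hab
    · intro x hx
      rw [rightCol, List.mem_reverse] at hx
      exact hbound x (mem_flatten_of_sec hx)

lemma revLt_trans {a b c : List ℕ} (h1 : RevLt a b) (h2 : RevLt b c) : RevLt a c := by
  rcases h1 with h1 | ⟨e1, l1⟩ <;> rcases h2 with h2 | ⟨e2, l2⟩
  · exact Or.inl (lt_trans h2 h1)
  · exact Or.inl (e2 ▸ h1)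
  · exact Or.inl (e1 ▸ h2)
  · exact Or.inr ⟨e1.trans e2, List.lex_trans lt_trans l1 l2⟩

lemma revLt_irrefl (a : List ℕ) : ¬ RevLt a a := by
  rintro (h | ⟨_, h⟩)
  · exact lt_irrefl _ h
  · exact irrefl _ h

def colSet (n : ℕ) : Finset (List ℕ) :=
  (Finset.Icc 1 n).powerset.image (fun s => (s.sort (· ≤ ·)).reverse)

lemma mem_colSet {n : ℕ} {c : List ℕ} (hc : IsColumn n c) : c ∈ colSet n := by
  classical
  refine Finset.mem_image.2 ⟨c.toFinset, ?_, ?_⟩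
  · exact Finset.mem_powerset.2
      (fun x hx => Finset.mem_Icc.2 (hc.2.2 x (List.mem_toFinset.1 hx)))
  · have hnd : c.reverse.Nodup := by
      rw [List.nodup_reverse]
      exact (List.isChain_iff_pairwise.1 hc.2.1).imp ne_of_gt
    have hsorted : List.Pairwise (· ≤ ·) c.reverse := by
      have h := List.pairwise_reverse.2 (List.isChain_iff_pairwise.1 hc.2.1)
      exact h.imp le_of_lt
    have hperm : (c.toFinset.sort (· ≤ ·)).Perm c.reverse := by
      rw [List.perm_ext_iff_of_nodup (Finset.sort_nodup _ _) hnd]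
      intro x
      rw [Finset.mem_sort, List.mem_toFinset, List.mem_reverse]
    have heq := List.Perm.eq_of_pairwise' (Finset.pairwise_sort _ _) hsorted hperm
    rw [List.reverse_eq_iff]
    exact heq

open Classical in
noncomputable def rho (n : ℕ) (c : List ℕ) : ℕ :=
  ((colSet n).filter (fun d => RevLt d c)).card

lemma rho_lt {n : ℕ} {c c' : List ℕ} (hc : c ∈ colSet n) (h : RevLt c c') :
    rho n c < rho n c' := by
  classical
  rw [rho, rho]
  apply Finset.card_lt_card
  constructor
  · intro d hd
    have hd' := Finset.mem_filter.1 hd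
    exact Finset.mem_filter.2 ⟨hd'.1, revLt_trans hd'.2 h⟩
  · intro hsub
    have hmem : c ∈ (colSet n).filter (fun d => RevLt d c) :=
      hsub (Finset.mem_filter.2 ⟨hc, h⟩)
    exact revLt_irrefl c (Finset.mem_filter.1 hmem).2

def LexNat (l l' : List ℕ) : Prop := l.length = l'.length ∧ List.Lex (· < ·) l l'

lemma lexNat_wf : WellFounded LexNat := by
  have key : ∀ k (l : List ℕ), l.length = k → Acc LexNat l := by
    intro k
    induction k with
    | zero =>
      intro l hl
      obtain rfl := List.length_eq_zero_iff.1 hl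
      constructor
      rintro l' ⟨hlen, hlex⟩
      cases hlex
    | succ k IHk =>
      intro l hl
      match l, hl with
      | x :: t, hl =>
        have ht : t.length = k := by simpa using hl
        clear hl
        induction x using Nat.strong_induction_on generalizing t with
        | _ x IHx =>
          have hAcc : Acc LexNat t := IHk t ht
          clear IHk
          revert ht
          induction hAcc with
          | intro t _ IHt =>
            intro ht
            constructor
            rintro l' ⟨hlen, hlex⟩
            match l', hlex with
            | [], hlex => simp at hlen
            | y :: t', hlex =>
              have ht' : t'.length = k := by
                simp only [List.length_cons] at hlen
                omega
              cases hlex with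
              | rel h => exact IHx y h t' ht'
              | cons h =>
                exact IHt t' ⟨by rw [ht', ht], h⟩ ht'
  exact ⟨fun l => key l.length l rfl⟩

def BigRel (n : ℕ) : List (List ℕ) → List (List ℕ) → Prop :=
  InvImage (Prod.Lex (· < ·) LexNat) (fun w => (w.length, w.map (rho n)))

lemma bigRel_wf (n : ℕ) : WellFounded (BigRel n) :=
  InvImage.wf _ (WellFounded.prod_lex Nat.lt_wfRel.wf lexNat_wf)

lemma lex_append {r : ℕ → ℕ → Prop} {l₁ l₂ : List ℕ} (p : List ℕ) (h : List.Lex r l₁ l₂) :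
    List.Lex r (p ++ l₁) (p ++ l₂) := by
  induction p with
  | nil => exact h
  | cons a t IH => exact List.Lex.cons IH

end ColProof

/-- Every column rewriting rule `c_u c_v ⇒ c_w c_{w'}` strictly decreases
words with respect to `≪`; hence the column rewriting system terminates. -/
theorem colStep_decreases_and_terminates (n : ℕ) :
    (∀ u v : List ℕ, IsColumn n u → IsColumn n v → ¬ TabPair u v →
      ColWordLt (outCols (Schensted (u ++ v))) [u, v]) ∧
    WellFounded (fun a b : List (List ℕ) => ColStep n b a) := by
  constructor
  · intro u v hu hv hnt
    exact ColProof.main_dec hu hv hnt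
  · refine Subrelation.wf ?_ (ColProof.bigRel_wf n)
    intro a b hstep
    obtain ⟨pre, suf, u, v, hu, hv, hnt, hb, ha⟩ := hstep
    by_cases hR : rightCol (Schensted (u ++ v)) = []
    · have h1 : outCols (Schensted (u ++ v)) = [leftCol (Schensted (u ++ v))] := by
        rw [outCols, if_pos hR]
      have hlen : a.length < b.length := by
        subst ha hb
        simp [h1]
      exact Prod.Lex.left _ _ hlen
    · have h1 : outCols (Schensted (u ++ v))
          = [leftCol (Schensted (u ++ v)), rightCol (Schensted (u ++ v))] := by
        rw [outCols, if_neg hR]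
      set L := leftCol (Schensted (u ++ v))
      set R := rightCol (Schensted (u ++ v))
      have hlen : a.length = b.length := by
        subst ha hb
        simp [h1]
      have hcols := ColProof.out_cols_columns hu hv
      have hLcol : L ∈ ColProof.colSet n := ColProof.mem_colSet hcols.1
      have hRcol : R ∈ ColProof.colSet n := ColProof.mem_colSet (hcols.2 hR)
      have hdec := ColProof.main_dec hu hv hnt
      rw [h1] at hdec
      have hlex : List.Lex (· < ·) (a.map (ColProof.rho n)) (b.map (ColProof.rho n)) := by
        subst ha hb
        rw [h1]
        simp only [List.map_append]
        rw [List.append_assoc, List.append_assoc]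
        apply ColProof.lex_append
        simp only [List.map_cons, List.map_nil, List.cons_append, List.nil_append]
        rcases hdec with h | ⟨_, i, hi, hrev, hpre⟩
        · simp at h
        · have hi2 : i < 2 := by simpa using hi
          clear hi
          interval_cases i
          · exact List.Lex.rel (ColProof.rho_lt hLcol (by simpa using hrev))
          · have hLu : L = u := by simpa using hpre 0 (by norm_num)
            rw [hLu]
            exact List.Lex.cons (List.Lex.rel (ColProof.rho_lt hRcol (by simpa using hrev)))
      show Prod.Lex (· < ·) ColProof.LexNat
        (a.length, a.map (ColProof.rho n)) (b.length, b.map (ColProof.rho n))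
      rw [hlen]
      exact Prod.Lex.right _ ⟨by simp [← hlen], hlex⟩
end

section
/- In the plactic monoid P_n, every word w over {1,...,n} is congruent to the column reading of its Schensted tableau: w = C(P(w)) in P_n. -/
/-- The column reading of a tableau (as a list of rows): columns are read
bottom to top, from left to right. -/
def colReading (t : List (List ℕ)) : List ℕ :=
  ((List.range ((t.map List.length).foldr max 0)).map
    (fun j => (t.filterMap (fun r => r[j]?)).reverse)).flatten

/-- The two Knuth rules on words over `{1,…,n}`. -/
def KnuthPair (n : ℕ) (w w' : List ℕ) : Prop :=
  (∃ x y z, 1 ≤ x ∧ x ≤ y ∧ y < z ∧ z ≤ n ∧ w = [z, x, y] ∧ w' = [x, z, y]) ∨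
  (∃ x y z, 1 ≤ x ∧ x < y ∧ y ≤ z ∧ z ≤ n ∧ w = [y, z, x] ∧ w' = [y, x, z])

/-- One application of a Knuth rule in context. -/
def KnuthStep (n : ℕ) (w w' : List ℕ) : Prop :=
  ∃ a b u v, KnuthPair n u v ∧ w = a ++ u ++ b ∧ w' = a ++ v ++ b

/-! ### Auxiliary development -/

namespace PlacticAux

/-- letters in range -/
def InR (n x : ℕ) : Prop := 1 ≤ x ∧ x ≤ n

abbrev KE (n : ℕ) : List ℕ → List ℕ → Prop := Relation.EqvGen (KnuthStep n)

variable {n : ℕ}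

lemma KE.refl (w : List ℕ) : KE n w w := Relation.EqvGen.refl w

lemma KE.of_eq {u v : List ℕ} (h : u = v) : KE n u v := h ▸ Relation.EqvGen.refl u

lemma KE.trans {u v w : List ℕ} (h1 : KE n u v) (h2 : KE n v w) : KE n u w :=
  Relation.EqvGen.trans _ _ _ h1 h2

lemma KE.symm {u v : List ℕ} (h : KE n u v) : KE n v u := Relation.EqvGen.symm _ _ h

lemma knuthStep_ctx {u v : List ℕ} (a b : List ℕ) (h : KnuthStep n u v) :
    KnuthStep n (a ++ u ++ b) (a ++ v ++ b) := by
  obtain ⟨a', b', u', v', hp, rfl, rfl⟩ := h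
  exact ⟨a ++ a', b' ++ b, u', v', hp, by simp, by simp⟩

lemma KE_ctx {u v : List ℕ} (a b : List ℕ) (h : KE n u v) :
    KE n (a ++ u ++ b) (a ++ v ++ b) := by
  induction h with
  | rel x y h => exact .rel _ _ (knuthStep_ctx a b h)
  | refl x => exact .refl _
  | symm x y _ ih => exact KE.symm ih
  | trans x y z _ _ ih1 ih2 => exact KE.trans ih1 ih2

lemma KE_rule1 (a b : List ℕ) {x y z : ℕ} (hx1 : 1 ≤ x) (hxy : x ≤ y) (hyz : y < z)
    (hzn : z ≤ n) : KE n (a ++ [z, x, y] ++ b) (a ++ [x, z, y] ++ b) :=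
  .rel _ _ ⟨a, b, _, _, Or.inl ⟨x, y, z, hx1, hxy, hyz, hzn, rfl, rfl⟩, rfl, rfl⟩

lemma KE_rule2 (a b : List ℕ) {x y z : ℕ} (hx1 : 1 ≤ x) (hxy : x < y) (hyz : y ≤ z)
    (hzn : z ≤ n) : KE n (a ++ [y, z, x] ++ b) (a ++ [y, x, z] ++ b) :=
  .rel _ _ ⟨a, b, _, _, Or.inr ⟨x, y, z, hx1, hxy, hyz, hzn, rfl, rfl⟩, rfl, rfl⟩

/-- Move a single small letter `x` leftwards over an increasing word `u` guarded
on the left by `g` with `x < g ≤ u`. -/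
lemma lemK : ∀ (u : List ℕ) (g x : ℕ), (g :: u).Pairwise (· ≤ ·) →
    (∀ b ∈ g :: u, InR n b) → InR n x → x < g →
    KE n (g :: (u ++ [x])) (g :: x :: u)
  | [], g, x, _, _, _, _ => KE.refl _
  | d :: u', g, x, hpw, hin, hx, hxg => by
    have hgd : g ≤ d := (List.pairwise_cons.1 hpw).1 d (by simp)
    have h1 : KE n (d :: (u' ++ [x])) (d :: x :: u') :=
      lemK u' d x (List.pairwise_cons.1 hpw).2
        (fun b hb => hin b (List.mem_cons_of_mem _ hb)) hx (lt_of_lt_of_le hxg hgd)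
    have h2 : KE n (g :: d :: (u' ++ [x])) (g :: d :: x :: u') := by
      simpa using KE_ctx [g] [] h1
    have h3 : KE n ([g, d, x] ++ u') ([g, x, d] ++ u') := by
      have := KE_rule2 (n := n) [] u' hx.1 hxg hgd (hin d (by simp)).2
      simpa using this
    exact h2.trans (by simpa using h3)

/-- Move a large letter `z` leftwards over an increasing word `α` with `α ≤ y < z`,
with `y` trailing on the right. -/
lemma lemM : ∀ (α : List ℕ) (y z : ℕ), α.Pairwise (· ≤ ·) → (∀ a ∈ α, a ≤ y) →
    y < z → (∀ a ∈ α, InR n a) → InR n y → InR n z →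
    KE n (α ++ [z, y]) (z :: (α ++ [y]))
  | [], y, z, _, _, _, _, _, _ => KE.refl _
  | a :: α₀, y, z, hpw, hay, hyz, hin, hy, hz => by
    have ha := hin a (by simp)
    have h1 : KE n (α₀ ++ [z, y]) (z :: (α₀ ++ [y])) :=
      lemM α₀ y z (List.pairwise_cons.1 hpw).2 (fun b hb => hay b (by simp [hb]))
        hyz (fun b hb => hin b (by simp [hb])) hy hz
    have h2 : KE n (a :: (α₀ ++ [z, y])) (a :: z :: (α₀ ++ [y])) := by
      simpa using KE_ctx [a] [] h1
    have h3 : KE n (a :: z :: (α₀ ++ [y])) (z :: a :: (α₀ ++ [y])) := by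
      cases α₀ with
      | nil =>
        have := KE_rule1 (n := n) [] [] ha.1 (hay a (by simp)) hyz hz.2
        exact (by simpa using this : KE n [z, a, y] [a, z, y]).symm
      | cons t α₁ =>
        have hat : a ≤ t := (List.pairwise_cons.1 hpw).1 t (by simp)
        have htz : t < z := lt_of_le_of_lt (hay t (by simp)) hyz
        have := KE_rule1 (n := n) [] (α₁ ++ [y]) ha.1 hat htz hz.2
        exact (by simpa using this :
          KE n (z :: a :: t :: (α₁ ++ [y])) (a :: z :: t :: (α₁ ++ [y]))).symm
    exact (h2.trans h3)

/-- Move a strictly decreasing word `d` leftwards over an increasing word `u`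
guarded by `g`, where `d < g ≤ u`. -/
lemma lemK2 : ∀ (d u : List ℕ) (g : ℕ), (g :: u).Pairwise (· ≤ ·) →
    (g :: d).Pairwise (· > ·) → (∀ b ∈ g :: u, InR n b) → (∀ b ∈ d, InR n b) →
    KE n (g :: (u ++ d)) (g :: (d ++ u))
  | [], u, g, _, _, _, _ => KE.of_eq (by simp)
  | x :: d', u, g, hpw, hdec, hin, hind => by
    have hxg : x < g := (List.pairwise_cons.1 hdec).1 x (by simp)
    have hx : InR n x := hind x (by simp)
    have h1 : KE n (g :: (u ++ [x]) ++ d') (g :: x :: u ++ d') := by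
      simpa using KE_ctx [] d' (lemK u g x hpw hin hx hxg)
    have hpw' : (x :: u).Pairwise (· ≤ ·) := by
      refine List.pairwise_cons.2 ⟨fun b hb => ?_, (List.pairwise_cons.1 hpw).2⟩
      exact le_of_lt (lt_of_lt_of_le hxg ((List.pairwise_cons.1 hpw).1 b hb))
    have hdec' : (x :: d').Pairwise (· > ·) := (List.pairwise_cons.1 hdec).2
    have h2 : KE n (x :: (u ++ d')) (x :: (d' ++ u)) :=
      lemK2 d' u x hpw' hdec'
        (fun b hb => by rcases List.mem_cons.1 hb with rfl | hb
                        · exact hx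
                        · exact hin b (by simp [hb]))
        (fun b hb => hind b (by simp [hb]))
    have h3 : KE n (g :: x :: (u ++ d')) (g :: x :: (d' ++ u)) := by
      simpa using KE_ctx [g] [] h2
    refine KE.trans (KE.of_eq (by simp)) (h1.trans ?_)
    exact (KE.of_eq (by simp)).trans (h3.trans (KE.of_eq (by simp)))

end PlacticAux

namespace PlacticAux

variable {n : ℕ}

/-! ### Row insertion facts -/

/-- index where `y` bumps in row `r` -/
def bIdx (r : List ℕ) (y : ℕ) : ℕ := r.findIdx (fun x => decide (y < x))

lemma rowInsert_pos {r : List ℕ} {y : ℕ} (h : bIdx r y < r.length) :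
    rowInsert r y = (r.set (bIdx r y) y, some (r[bIdx r y]'h)) := by
  have h' : List.findIdx (fun x => decide (y < x)) r < r.length := h
  simp only [rowInsert]
  rw [dif_pos h']
  rfl

lemma rowInsert_neg {r : List ℕ} {y : ℕ} (h : ¬ bIdx r y < r.length) :
    rowInsert r y = (r ++ [y], none) := by
  have h' : ¬ List.findIdx (fun x => decide (y < x)) r < r.length := h
  simp only [rowInsert]
  rw [dif_neg h']

lemma tabInsert_cons_pos {r : List ℕ} {rest : List (List ℕ)} {y : ℕ}
    (h : bIdx r y < r.length) :
    tabInsert (r :: rest) y = (r.set (bIdx r y) y) :: tabInsert rest (r[bIdx r y]'h) := by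
  show (match rowInsert r y with
    | (r', none) => r' :: rest
    | (r', some z) => r' :: tabInsert rest z) = _
  rw [rowInsert_pos h]

lemma tabInsert_cons_neg {r : List ℕ} {rest : List (List ℕ)} {y : ℕ}
    (h : ¬ bIdx r y < r.length) :
    tabInsert (r :: rest) y = (r ++ [y]) :: rest := by
  show (match rowInsert r y with
    | (r', none) => r' :: rest
    | (r', some z) => r' :: tabInsert rest z) = _
  rw [rowInsert_neg h]

lemma bIdx_lt {r : List ℕ} {y : ℕ} (h : bIdx r y < r.length) : y < r[bIdx r y] := by
  have := List.findIdx_getElem (p := fun x => decide (y < x)) (xs := r) (w := h)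
  exact of_decide_eq_true this

lemma bIdx_pre {r : List ℕ} {y : ℕ} {i : ℕ} (hi : i < bIdx r y) (h : i < r.length) :
    r[i] ≤ y := by
  have := List.not_of_lt_findIdx (p := fun x => decide (y < x)) (xs := r) hi
  simpa using this

lemma bIdx_all {r : List ℕ} {y : ℕ} (h : ¬ bIdx r y < r.length) :
    ∀ a ∈ r, a ≤ y := by
  intro a ha
  by_contra hya
  exact h (List.findIdx_lt_length_of_exists ⟨a, ha, by simpa using lt_of_not_ge hya⟩)

/-- rows and bounds -/
def RowOK (n : ℕ) (r : List ℕ) : Prop := r.Pairwise (· ≤ ·) ∧ ∀ x ∈ r, InR n x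

/-- domination of consecutive tableau rows -/
def Dom (r q : List ℕ) : Prop :=
  q.length ≤ r.length ∧ ∀ i, i < q.length → r.getD i 0 < q.getD i 0

lemma dom_trans {r q p : List ℕ} (h1 : Dom r q) (h2 : Dom q p) : Dom r p :=
  ⟨h2.1.trans h1.1, fun i hi => (h1.2 i (lt_of_lt_of_le hi h2.1)).trans (h2.2 i hi)⟩

lemma dom_getElem {r q : List ℕ} (h : Dom r q) {i : ℕ} (hi : i < q.length)
    (hir : i < r.length) : r[i] < q[i] := by
  have := h.2 i hi
  rwa [List.getD_eq_getElem r 0 hir, List.getD_eq_getElem q 0 hi] at this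

lemma dom_iff_getElem {r q : List ℕ} :
    Dom r q ↔ q.length ≤ r.length ∧
      ∀ i (hi : i < q.length) (hr : i < r.length), r[i] < q[i] := by
  constructor
  · intro h; exact ⟨h.1, fun i hi hr => dom_getElem h hi hr⟩
  · intro ⟨h1, h2⟩
    refine ⟨h1, fun i hi => ?_⟩
    have hr : i < r.length := lt_of_lt_of_le hi h1
    rw [List.getD_eq_getElem r 0 hr, List.getD_eq_getElem q 0 hi]
    exact h2 i hi hr

/-- a whole tableau is OK -/
def TabOK (n : ℕ) (t : List (List ℕ)) : Prop :=
  (∀ r ∈ t, RowOK n r) ∧ t.Pairwise Dom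

lemma rowOK_set {r : List ℕ} {y : ℕ} (hr : RowOK n r) (hy : InR n y)
    (h : bIdx r y < r.length) : RowOK n (r.set (bIdx r y) y) := by
  constructor
  · rw [List.pairwise_iff_getElem]
    intro i k hi hk hik
    rw [List.length_set] at hi hk
    have hpw := List.pairwise_iff_getElem.1 hr.1
    rw [List.getElem_set, List.getElem_set]
    by_cases hij : bIdx r y = i
    · subst hij
      rw [if_pos rfl, if_neg (by omega)]
      exact le_of_lt (lt_of_lt_of_le (bIdx_lt h) (hpw _ _ hi hk hik))
    · rw [if_neg hij]
      by_cases hkj : bIdx r y = k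
      · subst hkj
        rw [if_pos rfl]
        exact bIdx_pre hik hi
      · rw [if_neg hkj]
        exact hpw _ _ hi hk hik
  · intro x hx
    rcases List.mem_or_eq_of_mem_set hx with hx | rfl
    · exact hr.2 x hx
    · exact hy

lemma rowOK_append {r : List ℕ} {y : ℕ} (hr : RowOK n r) (hy : InR n y)
    (hall : ∀ a ∈ r, a ≤ y) : RowOK n (r ++ [y]) := by
  constructor
  · rw [List.pairwise_append]
    exact ⟨hr.1, List.pairwise_singleton _ _, fun a ha b hb => by
      simp at hb; subst hb; exact hall a ha⟩
  · intro x hx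
    rcases List.mem_append.1 hx with hx | hx
    · exact hr.2 x hx
    · simp at hx; subst hx; exact hy

end PlacticAux

namespace PlacticAux

variable {n : ℕ}

/-! ### Dominance preservation under insertion -/

lemma dom_append_right {r q : List ℕ} {y : ℕ} (h : Dom r q) : Dom (r ++ [y]) q := by
  rw [dom_iff_getElem] at h ⊢
  refine ⟨h.1.trans (by simp), fun i hi hr => ?_⟩
  have hir : i < r.length := lt_of_lt_of_le hi h.1
  rw [List.getElem_append_left hir]
  exact h.2 i hi hir

lemma dom_new {r : List ℕ} {y : ℕ} (h : bIdx r y < r.length) :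
    Dom (r.set (bIdx r y) y) [r[bIdx r y]'h] := by
  rw [dom_iff_getElem]
  refine ⟨by simp; omega, fun i hi hri => ?_⟩
  have hi0 : i = 0 := by simpa using hi
  subst hi0
  rw [List.length_set] at hri
  rw [List.getElem_set]
  simp only [List.getElem_singleton]
  by_cases h0 : bIdx r y = 0
  · rw [if_pos h0]; exact bIdx_lt h
  · rw [if_neg h0]
    exact lt_of_le_of_lt (bIdx_pre (by omega) hri) (bIdx_lt h)

lemma dom_core {r r₂ : List ℕ} {y : ℕ} {j : ℕ} (hj : j < r.length)
    (hyz : y < r[j]) (hpre : ∀ i, i < j → ∀ (hi : i < r.length), r[i] ≤ y)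
    (hd : Dom r r₂) : Dom (r.set j y) (rowInsert r₂ (r[j]'hj)).1 := by
  rw [dom_iff_getElem] at hd
  by_cases h₂ : bIdx r₂ (r[j]'hj) < r₂.length
  · rw [rowInsert_pos h₂]
    have hj₂ : bIdx r₂ (r[j]'hj) ≤ j := by
      by_contra hc
      push_neg at hc
      have hlen : j < r₂.length := lt_of_lt_of_le hc (le_of_lt h₂)
      have h1 := bIdx_pre (r := r₂) (y := r[j]'hj) hc hlen
      have h2 := hd.2 j hlen hj
      omega
    rw [dom_iff_getElem]
    refine ⟨by simpa using hd.1, fun i hi hri => ?_⟩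
    rw [List.length_set] at hi hri
    rw [List.getElem_set, List.getElem_set]
    by_cases hiy : j = i
    · subst hiy
      rw [if_pos rfl]
      by_cases hiz : bIdx r₂ (r[j]'hj) = j
      · rw [if_pos hiz]; exact hyz
      · rw [if_neg hiz]
        exact lt_trans hyz (hd.2 j hi hj)
    · rw [if_neg hiy]
      by_cases hiz : bIdx r₂ (r[j]'hj) = i
      · rw [if_pos hiz]
        exact lt_of_le_of_lt (hpre i (by omega) hri) hyz
      · rw [if_neg hiz]
        exact hd.2 i hi hri
  · rw [rowInsert_neg h₂]
    have hlen2 : r₂.length ≤ j := by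
      by_contra hc
      push_neg at hc
      have hlt := hd.2 j hc hj
      exact h₂ (List.findIdx_lt_length_of_exists
        ⟨r₂[j], List.getElem_mem hc, by simpa using hlt⟩)
    rw [dom_iff_getElem]
    refine ⟨by simp; omega, fun i hi hri => ?_⟩
    rw [List.length_set] at hri
    rw [List.getElem_set]
    rcases Nat.lt_or_ge i r₂.length with hir2 | hir2
    · rw [List.getElem_append_left hir2, if_neg (by omega)]
      exact hd.2 i hir2 hri
    · have hieq : i = r₂.length := by
        simp only [List.length_append, List.length_singleton] at hi
        omega
      rw [List.getElem_append_right hir2]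
      subst hieq
      simp only [Nat.sub_self, List.getElem_singleton]
      by_cases hji : j = r₂.length
      · rw [if_pos hji]; exact hyz
      · rw [if_neg hji]
        exact lt_of_le_of_lt (hpre r₂.length (by omega) hri) hyz

lemma dom_insert_pos {r r₂ : List ℕ} {y : ℕ} (hd : Dom r r₂)
    (h : bIdx r y < r.length) :
    Dom (r.set (bIdx r y) y) (rowInsert r₂ (r[bIdx r y]'h)).1 :=
  dom_core h (bIdx_lt h) (fun i hi hir => bIdx_pre hi hir) hd

/-! ### Insertion preserves tableaux -/

lemma tabOK_nil : TabOK n [] := ⟨by simp, List.Pairwise.nil⟩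

lemma tabOK_cons_iff {r : List ℕ} {rest : List (List ℕ)} :
    TabOK n (r :: rest) ↔ RowOK n r ∧ TabOK n rest ∧ ∀ q ∈ rest, Dom r q := by
  constructor
  · intro ⟨h1, h2⟩
    rw [List.pairwise_cons] at h2
    exact ⟨h1 r (by simp), ⟨fun q hq => h1 q (by simp [hq]), h2.2⟩, h2.1⟩
  · intro ⟨h1, ⟨h2, h3⟩, h4⟩
    refine ⟨fun q hq => ?_, List.pairwise_cons.2 ⟨h4, h3⟩⟩
    rcases List.mem_cons.1 hq with rfl | hq
    · exact h1
    · exact h2 q hq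

lemma tabInsert_shape (r : List ℕ) (rest : List (List ℕ)) (y : ℕ) :
    ∃ tl, tabInsert (r :: rest) y = (rowInsert r y).1 :: tl := by
  by_cases h : bIdx r y < r.length
  · exact ⟨_, by rw [tabInsert_cons_pos h, rowInsert_pos h]⟩
  · exact ⟨_, by rw [tabInsert_cons_neg h, rowInsert_neg h]⟩

lemma tabInsert_ok : ∀ (t : List (List ℕ)) (y : ℕ), TabOK n t → InR n y →
    TabOK n (tabInsert t y)
  | [], y, _, hy => by
    simp only [tabInsert]
    refine tabOK_cons_iff.2 ⟨⟨List.pairwise_singleton _ _, ?_⟩, tabOK_nil, by simp⟩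
    intro x hx
    rw [List.mem_singleton] at hx
    subst hx
    exact hy
  | r :: rest, y, ht, hy => by
    rcases tabOK_cons_iff.1 ht with ⟨hr, hrest, hdom⟩
    by_cases h : bIdx r y < r.length
    · rw [tabInsert_cons_pos h]
      have hz : InR n (r[bIdx r y]'h) := hr.2 _ (List.getElem_mem h)
      have hrec := tabInsert_ok rest (r[bIdx r y]'h) hrest hz
      refine tabOK_cons_iff.2 ⟨rowOK_set hr hy h, hrec, ?_⟩
      cases rest with
      | nil =>
        intro q hq
        simp only [tabInsert, List.mem_singleton] at hq
        subst hq
        exact dom_new h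
      | cons r₂ rest₂ =>
        intro q hq
        have hd2 : Dom r r₂ := hdom r₂ (by simp)
        obtain ⟨tl, htl⟩ := tabInsert_shape r₂ rest₂ (r[bIdx r y]'h)
        rw [htl] at hq hrec
        have hhd : Dom (r.set (bIdx r y) y) (rowInsert r₂ (r[bIdx r y]'h)).1 :=
          dom_insert_pos hd2 h
        rcases List.mem_cons.1 hq with rfl | hq
        · exact hhd
        · exact dom_trans hhd ((List.pairwise_cons.1 hrec.2).1 q hq)
    · rw [tabInsert_cons_neg h]
      exact tabOK_cons_iff.2 ⟨rowOK_append hr hy (bIdx_all h), hrest,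
        fun q hq => dom_append_right (hdom q hq)⟩

/-! ### Word-level bumping -/

lemma bump_core {α β : List ℕ} {y z : ℕ} (hpα : α.Pairwise (· ≤ ·))
    (hαy : ∀ a ∈ α, a ≤ y) (hyz : y < z) (hpzβ : (z :: β).Pairwise (· ≤ ·))
    (hinα : ∀ a ∈ α, InR n a) (hinβ : ∀ b ∈ z :: β, InR n b) (hy : InR n y) :
    KE n ((α ++ z :: β) ++ [y]) (z :: (α ++ y :: β)) := by
  have step1 : KE n (α ++ (z :: (β ++ [y])) ++ []) (α ++ (z :: y :: β) ++ []) :=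
    KE_ctx _ _ (lemK β z y hpzβ hinβ hy hyz)
  have step2 : KE n ([] ++ (α ++ [z, y]) ++ β) ([] ++ (z :: (α ++ [y])) ++ β) :=
    KE_ctx _ _ (lemM α y z hpα hαy hyz hinα hy (hinβ z (by simp)))
  refine KE.trans (KE.of_eq (by simp)) (KE.trans step1 ?_)
  exact KE.trans (KE.of_eq (by simp)) (KE.trans step2 (KE.of_eq (by simp)))

lemma bump_word {r : List ℕ} {y : ℕ} (hr : RowOK n r) (hy : InR n y)
    (h : bIdx r y < r.length) :
    KE n (r ++ [y]) (r[bIdx r y]'h :: r.set (bIdx r y) y) := by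
  have hdecomp : r = r.take (bIdx r y) ++ r[bIdx r y]'h :: r.drop (bIdx r y + 1) := by
    conv_lhs => rw [← List.take_append_drop (bIdx r y) r]
    rw [List.drop_eq_getElem_cons h]
  have hset : r.set (bIdx r y) y = r.take (bIdx r y) ++ y :: r.drop (bIdx r y + 1) := by
    rw [List.set_eq_take_append_cons_drop, if_pos h]
  have hpα : (r.take (bIdx r y)).Pairwise (· ≤ ·) :=
    hr.1.sublist (List.take_sublist _ _)
  have hαy : ∀ a ∈ r.take (bIdx r y), a ≤ y := by
    intro a ha
    obtain ⟨i, hil, hia⟩ := List.getElem_of_mem ha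
    rw [List.getElem_take] at hia
    rw [List.length_take] at hil
    rw [← hia]
    exact bIdx_pre (by omega) (by omega)
  have hpzβ : (r[bIdx r y]'h :: r.drop (bIdx r y + 1)).Pairwise (· ≤ ·) := by
    rw [← List.drop_eq_getElem_cons h]
    exact hr.1.sublist (List.drop_sublist _ _)
  have hinα : ∀ a ∈ r.take (bIdx r y), InR n a :=
    fun a ha => hr.2 a (List.mem_of_mem_take ha)
  have hinβ : ∀ b ∈ r[bIdx r y]'h :: r.drop (bIdx r y + 1), InR n b := by
    intro b hb
    rw [← List.drop_eq_getElem_cons h] at hb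
    exact hr.2 b (List.mem_of_mem_drop hb)
  rw [hset]
  conv_lhs => rw [hdecomp]
  exact bump_core hpα hαy (bIdx_lt h) hpzβ hinα hinβ hy

/-! ### Row reading -/

def rowWord (t : List (List ℕ)) : List ℕ := t.reverse.flatten

@[simp] lemma rowWord_nil : rowWord ([] : List (List ℕ)) = [] := rfl

lemma rowWord_cons (r : List ℕ) (t : List (List ℕ)) :
    rowWord (r :: t) = rowWord t ++ r := by simp [rowWord]

lemma rowWord_append_single (t : List (List ℕ)) (q : List ℕ) :
    rowWord (t ++ [q]) = q ++ rowWord t := by simp [rowWord]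

lemma rowWord_tabInsert : ∀ (t : List (List ℕ)) (y : ℕ), TabOK n t → InR n y →
    KE n (rowWord t ++ [y]) (rowWord (tabInsert t y))
  | [], y, _, _ => KE.of_eq (by simp [tabInsert, rowWord_cons])
  | r :: rest, y, ht, hy => by
    rcases tabOK_cons_iff.1 ht with ⟨hr, hrest, _⟩
    by_cases h : bIdx r y < r.length
    · rw [tabInsert_cons_pos h, rowWord_cons, rowWord_cons]
      have hz : InR n (r[bIdx r y]'h) := hr.2 _ (List.getElem_mem h)
      have s1 : KE n (rowWord rest ++ (r ++ [y]) ++ [])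
          (rowWord rest ++ (r[bIdx r y]'h :: r.set (bIdx r y) y) ++ []) :=
        KE_ctx _ _ (bump_word hr hy h)
      have s2 : KE n ([] ++ (rowWord rest ++ [r[bIdx r y]'h]) ++ r.set (bIdx r y) y)
          ([] ++ rowWord (tabInsert rest (r[bIdx r y]'h)) ++ r.set (bIdx r y) y) :=
        KE_ctx _ _ (rowWord_tabInsert rest _ hrest hz)
      refine KE.trans (KE.of_eq (by simp)) (KE.trans s1 ?_)
      exact KE.trans (KE.of_eq (by simp)) (KE.trans s2 (KE.of_eq (by simp)))
    · rw [tabInsert_cons_neg h, rowWord_cons, rowWord_cons]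
      exact KE.of_eq (by simp)

lemma schensted_concat (w : List ℕ) (y : ℕ) :
    Schensted (w ++ [y]) = tabInsert (Schensted w) y := by
  simp [Schensted, List.foldl_concat]

lemma schensted_ok : ∀ (w : List ℕ), (∀ x ∈ w, InR n x) →
    TabOK n (Schensted w) ∧ KE n w (rowWord (Schensted w)) := by
  intro w
  induction w using List.reverseRecOn with
  | nil => exact fun _ => ⟨tabOK_nil, KE.of_eq rfl⟩
  | append_singleton w₀ y ih =>
    intro hw
    have hw₀ : ∀ x ∈ w₀, InR n x := fun x hx => hw x (by simp [hx])
    have hy : InR n y := hw y (by simp)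
    obtain ⟨hok, hke⟩ := ih hw₀
    rw [schensted_concat]
    refine ⟨tabInsert_ok _ _ hok hy, ?_⟩
    have s1 : KE n ([] ++ w₀ ++ [y]) ([] ++ rowWord (Schensted w₀) ++ [y]) :=
      KE_ctx _ _ hke
    exact KE.trans (KE.of_eq (by simp)) (KE.trans s1
      (KE.trans (KE.of_eq (by simp)) (rowWord_tabInsert _ _ hok hy)))

/-! ### Column reading versus row reading -/

def maxW (t : List (List ℕ)) : ℕ := (t.map List.length).foldr max 0

def col0 (t : List (List ℕ)) : List ℕ := (t.filterMap (fun r => r[0]?)).reverse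

def tails (t : List (List ℕ)) : List (List ℕ) := t.map List.tail

lemma colReading_eq (t : List (List ℕ)) : colReading t = ((List.range (maxW t)).map
    (fun j => (t.filterMap (fun r => r[j]?)).reverse)).flatten := rfl

lemma colReading_zero {t : List (List ℕ)} (h : maxW t = 0) : colReading t = [] := by
  rw [colReading_eq, h]
  simp

@[simp] lemma maxW_nil : maxW [] = 0 := rfl

lemma maxW_cons (r : List ℕ) (t : List (List ℕ)) :
    maxW (r :: t) = max r.length (maxW t) := rfl

lemma maxW_tails (t : List (List ℕ)) : maxW (tails t) = maxW t - 1 := by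
  induction t with
  | nil => rfl
  | cons r t ih =>
    have : tails (r :: t) = r.tail :: tails t := by simp [tails]
    rw [this, maxW_cons, maxW_cons, ih, List.length_tail]
    omega

lemma maxW_zero : ∀ {t : List (List ℕ)}, maxW t = 0 → ∀ r ∈ t, r = []
  | [], _, r, hr => by simp at hr
  | r₀ :: t, h, r, hr => by
    rw [maxW_cons] at h
    rcases List.mem_cons.1 hr with rfl | hr
    · exact List.length_eq_zero_iff.1 (by omega)
    · exact maxW_zero (by omega) r hr

lemma colReading_succ {t : List (List ℕ)} {L : ℕ} (h : maxW t = L + 1) :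
    colReading t = col0 t ++ colReading (tails t) := by
  have htails : maxW (tails t) = L := by rw [maxW_tails, h]; omega
  have hfun : ∀ j : ℕ, ((tails t).filterMap (fun r => r[j]?))
      = t.filterMap (fun r => r[j+1]?) := by
    intro j
    have hc : ((fun r : List ℕ => r[j]?) ∘ List.tail) = fun r : List ℕ => r[j+1]? := by
      funext r
      exact List.getElem?_tail
    rw [tails, List.filterMap_map, hc]
  rw [colReading_eq, colReading_eq, htails, h, List.range_succ_eq_map,
    List.map_cons, List.flatten_cons, List.map_map]
  congr 1
  refine congrArg List.flatten ?_
  refine List.map_congr_left fun j hj => ?_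
  simp only [Function.comp_apply, Nat.succ_eq_add_one]
  rw [hfun j]

lemma col0_append_cons (t₀ : List (List ℕ)) (a : ℕ) (s : List ℕ) :
    col0 (t₀ ++ [a :: s]) = a :: col0 t₀ := by
  simp [col0, List.filterMap_append]

lemma col0_append_nil (t₀ : List (List ℕ)) : col0 (t₀ ++ [[]]) = col0 t₀ := by
  simp [col0, List.filterMap_append]

lemma tabOK_append {t₀ : List (List ℕ)} {q : List ℕ} (h : TabOK n (t₀ ++ [q])) :
    TabOK n t₀ ∧ RowOK n q ∧ ∀ p ∈ t₀, Dom p q := by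
  obtain ⟨h1, h2⟩ := h
  rw [List.pairwise_append] at h2
  exact ⟨⟨fun r hr => h1 r (by simp [hr]), h2.1⟩, h1 q (by simp),
    fun p hp => h2.2.2 p hp q (by simp)⟩

lemma mem_col0 {t : List (List ℕ)} {b : ℕ} (hb : b ∈ col0 t) :
    ∃ p ∈ t, ∃ (h : 0 < p.length), p[0] = b := by
  rw [col0, List.mem_reverse, List.mem_filterMap] at hb
  obtain ⟨p, hp, hpb⟩ := hb
  rw [List.getElem?_eq_some_iff] at hpb
  exact ⟨p, hp, hpb⟩

lemma col0_pairwise {t : List (List ℕ)} (h : t.Pairwise Dom) :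
    (col0 t).Pairwise (· > ·) := by
  rw [col0, List.pairwise_reverse, List.pairwise_filterMap]
  refine h.imp ?_
  intro p q hpq b hb b' hb'
  rw [List.getElem?_eq_some_iff] at hb hb'
  obtain ⟨h1, rfl⟩ := hb
  obtain ⟨h2, rfl⟩ := hb'
  exact dom_getElem hpq h2 h1

lemma tabOK_tails {t : List (List ℕ)} (h : TabOK n t) : TabOK n (tails t) := by
  refine ⟨?_, ?_⟩
  · intro r hr
    rw [tails, List.mem_map] at hr
    obtain ⟨p, hp, rfl⟩ := hr
    exact ⟨(h.1 p hp).1.sublist (List.tail_sublist p),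
      fun x hx => (h.1 p hp).2 x (List.mem_of_mem_tail hx)⟩
  · rw [tails, List.pairwise_map]
    refine h.2.imp ?_
    intro p q hpq
    obtain ⟨hl, he⟩ := dom_iff_getElem.1 hpq
    rw [dom_iff_getElem]
    constructor
    · simp only [List.length_tail]
      omega
    · intro i hi hr
      simp only [List.length_tail] at hi hr
      rw [List.getElem_tail, List.getElem_tail]
      exact he (i + 1) (by omega) (by omega)

lemma rowWord_step : ∀ (t : List (List ℕ)), TabOK n t →
    KE n (rowWord t) (col0 t ++ rowWord (tails t)) := by
  intro t
  induction t using List.reverseRecOn with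
  | nil => exact fun _ => KE.of_eq (by simp [col0, tails])
  | append_singleton t₀ q ih =>
    intro ht
    obtain ⟨ht₀, hq, hdom⟩ := tabOK_append ht
    cases q with
    | nil =>
      have e1 : tails (t₀ ++ [[]]) = tails t₀ ++ [[]] := by simp [tails]
      rw [rowWord_append_single, col0_append_nil, e1, rowWord_append_single]
      simpa using ih ht₀
    | cons a s =>
      have e1 : tails (t₀ ++ [a :: s]) = tails t₀ ++ [s] := by simp [tails]
      rw [rowWord_append_single, col0_append_cons, e1, rowWord_append_single]
      have ha : InR n a := hq.2 a (by simp)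
      have s1 : KE n ((a :: s) ++ rowWord t₀ ++ [])
          ((a :: s) ++ (col0 t₀ ++ rowWord (tails t₀)) ++ []) :=
        KE_ctx _ _ (ih ht₀)
      have hdec : (a :: col0 t₀).Pairwise (· > ·) := by
        rw [List.pairwise_cons]
        refine ⟨fun b hb => ?_, col0_pairwise ht₀.2⟩
        obtain ⟨p, hp, h0, rfl⟩ := mem_col0 hb
        have := dom_getElem (hdom p hp) (show 0 < (a :: s).length by simp) h0
        simpa using this
      have hind : ∀ b ∈ col0 t₀, InR n b := by
        intro b hb
        obtain ⟨p, hp, h0, rfl⟩ := mem_col0 hb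
        exact (ht₀.1 p hp).2 _ (List.getElem_mem h0)
      have s2 : KE n ([] ++ (a :: (s ++ col0 t₀)) ++ rowWord (tails t₀))
          ([] ++ (a :: (col0 t₀ ++ s)) ++ rowWord (tails t₀)) :=
        KE_ctx _ _ (lemK2 (col0 t₀) s a hq.1 hdec hq.2 hind)
      refine KE.trans (KE.of_eq (by simp)) (KE.trans s1 ?_)
      exact KE.trans (KE.of_eq (by simp)) (KE.trans s2 (KE.of_eq (by simp)))

lemma rowWord_equiv_colReading : ∀ (L : ℕ) (t : List (List ℕ)), maxW t ≤ L →
    TabOK n t → KE n (rowWord t) (colReading t) := by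
  intro L
  induction L with
  | zero =>
    intro t hL ht
    have h0 : maxW t = 0 := by omega
    refine KE.of_eq ?_
    rw [colReading_zero h0, rowWord, List.flatten_eq_nil_iff]
    intro l hl
    exact maxW_zero h0 l (List.mem_reverse.1 hl)
  | succ L ih =>
    intro t hL ht
    rcases Nat.eq_zero_or_pos (maxW t) with h0 | hpos
    · refine KE.of_eq ?_
      rw [colReading_zero h0, rowWord, List.flatten_eq_nil_iff]
      intro l hl
      exact maxW_zero h0 l (List.mem_reverse.1 hl)
    · obtain ⟨M, hM⟩ := Nat.exists_eq_succ_of_ne_zero (Nat.pos_iff_ne_zero.1 hpos)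
      have hrec := ih (tails t) (by rw [maxW_tails]; omega) (tabOK_tails ht)
      rw [colReading_succ hM]
      refine (rowWord_step t ht).trans ?_
      simpa using KE_ctx (col0 t) [] hrec

end PlacticAux

/-- In the plactic monoid `P_n`, every word is congruent to the column reading
of its Schensted tableau: `w = C(P(w))`. -/
theorem word_congruent_colReading_schensted (n : ℕ) (w : List ℕ)
    (hw : ∀ x ∈ w, 1 ≤ x ∧ x ≤ n) :
    Relation.EqvGen (KnuthStep n) w (colReading (Schensted w)) := by
  obtain ⟨hok, hke⟩ := PlacticAux.schensted_ok w (fun x hx => hw x hx)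
  exact hke.trans
    (PlacticAux.rowWord_equiv_colReading (PlacticAux.maxW (Schensted w)) _ le_rfl hok)
end

section
/- The number of 2-cells of the column presentation of P_n equals (2^n - 1)^2 minus (T_2(n) - T_1(n)), where T_q(n) = ∏_{1 ≤ i ≤ j ≤ n} (q + i + j - 1)/(i + j - 1) is the number of semistandard tableaux with at most q columns and entries in {1,...,n}. In particular, the number of pairs of columns (u,v) over {1,...,n} that form a tableau configuration equals T_2(n) - T_1(n). -/
/-- Gordon's number `T_q(n) = ∏_{1 ≤ i ≤ j ≤ n} (q+i+j-1)/(i+j-1)`, the number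
of semistandard tableaux with at most `q` columns and entries in `{1,…,n}`. -/
noncomputable def gordon (n q : ℕ) : ℚ :=
  ∏ p ∈ (Finset.Icc 1 n ×ˢ Finset.Icc 1 n).filter (fun p => p.1 ≤ p.2),
    (((q : ℚ) + p.1 + p.2 - 1) / ((p.1 : ℚ) + p.2 - 1))


def Dom (S T : Finset ℕ) : Prop := ∀ k, (T.filter (· ≤ k)).card ≤ (S.filter (· ≤ k)).card

lemma sort_getD_le_iff (S : Finset ℕ) {i : ℕ} (k : ℕ) (hi : i < S.card) :
    (S.sort (· ≤ ·)).getD i 0 ≤ k ↔ i < (S.filter (· ≤ k)).card := by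
  have hlen : i < (S.sort (· ≤ ·)).length := by rwa [Finset.length_sort]
  have hgd : (S.sort (· ≤ ·)).getD i 0 = S.orderEmbOfFin rfl ⟨i, hi⟩ := by
    rw [List.getD_eq_getElem _ _ hlen, Finset.orderEmbOfFin_apply]
    rfl
  set f := S.orderEmbOfFin rfl with hf
  have hcard : (Finset.univ.filter (fun j : Fin S.card => f j ≤ k)).card
      = (S.filter (· ≤ k)).card := by
    apply Finset.card_bij (fun j _ => f j)
    · intro j hj
      simp only [Finset.mem_filter, Finset.mem_univ, true_and] at hj ⊢
      exact ⟨Finset.orderEmbOfFin_mem S rfl j, hj⟩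
    · intro a _ b _ hab
      exact f.injective hab
    · intro x hx
      simp only [Finset.mem_filter] at hx
      have : x ∈ Set.range f := by
        rw [hf, Finset.range_orderEmbOfFin]; exact hx.1
      obtain ⟨j, hj⟩ := this
      exact ⟨j, by simp [hj, hx.2], hj⟩
  rw [hgd, ← hcard]
  constructor
  · intro h
    have hsub : Finset.Iic (⟨i, hi⟩ : Fin S.card)
        ⊆ Finset.univ.filter (fun j : Fin S.card => f j ≤ k) := by
      intro j hj
      simp only [Finset.mem_Iic] at hj
      simp only [Finset.mem_filter, Finset.mem_univ, true_and]
      exact le_trans (f.monotone hj) h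
    have := Finset.card_le_card hsub
    rw [Fin.card_Iic] at this
    simp only [Fin.val_mk] at this
    omega
  · intro h
    by_contra hc
    push_neg at hc
    have hsub : Finset.univ.filter (fun j : Fin S.card => f j ≤ k)
        ⊆ Finset.Iio (⟨i, hi⟩ : Fin S.card) := by
      intro j hj
      simp only [Finset.mem_filter, Finset.mem_univ, true_and] at hj
      simp only [Finset.mem_Iio]
      exact f.strictMono.lt_iff_lt.mp (lt_of_le_of_lt hj hc)
    have := Finset.card_le_card hsub
    rw [Fin.card_Iio] at this
    simp only [Fin.val_mk] at this
    omega

lemma tab_iff_dom (S T : Finset ℕ) :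
    (T.card ≤ S.card ∧ ∀ i < T.card,
      (S.sort (· ≤ ·)).getD i 0 ≤ (T.sort (· ≤ ·)).getD i 0) ↔ Dom S T := by
  constructor
  · rintro ⟨hcard, h⟩ k
    set c := (T.filter (· ≤ k)).card with hc
    rcases Nat.eq_zero_or_pos c with h0 | h0
    · omega
    have hcT : c ≤ T.card := Finset.card_le_card (Finset.filter_subset _ _)
    have hi : c - 1 < T.card := by omega
    have hy : (T.sort (· ≤ ·)).getD (c-1) 0 ≤ k := by
      rw [sort_getD_le_iff T k hi]; omega
    have hx : (S.sort (· ≤ ·)).getD (c-1) 0 ≤ k :=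
      le_trans (h _ hi) hy
    rw [sort_getD_le_iff S k (by omega)] at hx
    omega
  · intro hd
    have hcard : T.card ≤ S.card := by
      have := hd ((S ∪ T).sup id)
      have hT : T.filter (· ≤ (S ∪ T).sup id) = T := by
        apply Finset.filter_true_of_mem
        intro x hx
        exact Finset.le_sup (f := id) (Finset.mem_union_right _ hx)
      have hS : S.filter (· ≤ (S ∪ T).sup id) = S := by
        apply Finset.filter_true_of_mem
        intro x hx
        exact Finset.le_sup (f := id) (Finset.mem_union_left _ hx)
      rwa [hT, hS] at this
    refine ⟨hcard, fun i hi => ?_⟩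
    set y := (T.sort (· ≤ ·)).getD i 0 with hy
    have h1 : i < (T.filter (· ≤ y)).card := by
      rw [← sort_getD_le_iff T y hi]
    have h2 : i < (S.filter (· ≤ y)).card := lt_of_lt_of_le h1 (hd y)
    rw [← sort_getD_le_iff S y (by omega)] at h2
    exact h2


open scoped Classical in
noncomputable def DD (n d : ℕ) : Finset (Finset ℕ × Finset ℕ) :=
  ((Finset.Icc 1 n).powerset ×ˢ (Finset.Icc 1 n).powerset).filter
    (fun p => Dom p.1 p.2 ∧ p.1.card = p.2.card + d)

lemma mem_DD {n d : ℕ} {p : Finset ℕ × Finset ℕ} :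
    p ∈ DD n d ↔ p.1 ⊆ Finset.Icc 1 n ∧ p.2 ⊆ Finset.Icc 1 n ∧ Dom p.1 p.2
      ∧ p.1.card = p.2.card + d := by
  simp [DD, Finset.mem_filter, Finset.mem_product, Finset.mem_powerset, and_assoc]

lemma top_not_mem {n : ℕ} {S : Finset ℕ} (hS : S ⊆ Finset.Icc 1 n) : n + 1 ∉ S := by
  intro h
  have := (Finset.mem_Icc.mp (hS h)).2
  omega

lemma subset_Icc_succ {n : ℕ} {S : Finset ℕ} (hS : S ⊆ Finset.Icc 1 n) :
    S ⊆ Finset.Icc 1 (n+1) :=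
  hS.trans (Finset.Icc_subset_Icc_right (by omega))

lemma subset_Icc_of_not_top {n : ℕ} {S : Finset ℕ} (hS : S ⊆ Finset.Icc 1 (n+1))
    (h : n + 1 ∉ S) : S ⊆ Finset.Icc 1 n := by
  intro x hx
  have hm := Finset.mem_Icc.mp (hS hx)
  have : x ≠ n + 1 := fun he => h (he ▸ hx)
  exact Finset.mem_Icc.mpr ⟨hm.1, by omega⟩

lemma erase_subset_Icc {n : ℕ} {S : Finset ℕ} (hS : S ⊆ Finset.Icc 1 (n+1)) :
    S.erase (n+1) ⊆ Finset.Icc 1 n :=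
  subset_Icc_of_not_top ((Finset.erase_subset _ _).trans hS) (Finset.notMem_erase _ _)

lemma insert_subset_Icc {n : ℕ} {S : Finset ℕ} (hS : S ⊆ Finset.Icc 1 n) :
    insert (n+1) S ⊆ Finset.Icc 1 (n+1) :=
  Finset.insert_subset (Finset.mem_Icc.mpr (by omega)) (subset_Icc_succ hS)

lemma filter_all {S : Finset ℕ} {m k : ℕ} (hS : S ⊆ Finset.Icc 1 m) (hk : m ≤ k) :
    S.filter (· ≤ k) = S :=
  Finset.filter_true_of_mem fun x hx => le_trans (Finset.mem_Icc.mp (hS hx)).2 hk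

lemma filter_insert_top {T : Finset ℕ} {n k : ℕ} (hk : k ≤ n) :
    (insert (n+1) T).filter (· ≤ k) = T.filter (· ≤ k) := by
  rw [Finset.filter_insert, if_neg (by omega)]

lemma dom_of_bounded {m : ℕ} {S T : Finset ℕ} (hS : S ⊆ Finset.Icc 1 m)
    (hT : T ⊆ Finset.Icc 1 m)
    (h : ∀ k ≤ m, (T.filter (· ≤ k)).card ≤ (S.filter (· ≤ k)).card) : Dom S T := by
  intro k
  by_cases hk : k ≤ m
  · exact h k hk
  · rw [filter_all hS (by omega), filter_all hT (by omega)]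
    have := h m le_rfl
    rwa [filter_all hS le_rfl, filter_all hT le_rfl] at this

lemma dom_card_le {S T : Finset ℕ} {m : ℕ} (hS : S ⊆ Finset.Icc 1 m)
    (hT : T ⊆ Finset.Icc 1 m) (h : Dom S T) : T.card ≤ S.card := by
  have := h m
  rwa [filter_all hS le_rfl, filter_all hT le_rfl] at this

lemma dom_insert_insert {n : ℕ} {S T : Finset ℕ} (hS : S ⊆ Finset.Icc 1 n)
    (hT : T ⊆ Finset.Icc 1 n) :
    Dom (insert (n+1) S) (insert (n+1) T) ↔ Dom S T := by
  constructor
  · intro h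
    apply dom_of_bounded hS hT
    intro k hk
    have := h k
    rwa [filter_insert_top hk, filter_insert_top hk] at this
  · intro h
    apply dom_of_bounded (insert_subset_Icc hS) (insert_subset_Icc hT)
    intro k hk
    by_cases hk' : k ≤ n
    · rw [filter_insert_top hk', filter_insert_top hk']
      exact h k
    · have hk2 : k = n + 1 := by omega
      subst hk2
      rw [filter_all (insert_subset_Icc hS) le_rfl, filter_all (insert_subset_Icc hT) le_rfl,
        Finset.card_insert_of_notMem (top_not_mem hS),
        Finset.card_insert_of_notMem (top_not_mem hT)]
      exact Nat.succ_le_succ (dom_card_le hS hT h)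

lemma dom_insert_left {n : ℕ} {S T : Finset ℕ} (hS : S ⊆ Finset.Icc 1 n)
    (hT : T ⊆ Finset.Icc 1 n) (h : Dom S T) : Dom (insert (n+1) S) T := by
  apply dom_of_bounded (insert_subset_Icc hS) (subset_Icc_succ hT)
  intro k hk
  by_cases hk' : k ≤ n
  · rw [filter_insert_top hk']
    exact h k
  · have hk2 : k = n + 1 := by omega
    subst hk2
    rw [filter_all (insert_subset_Icc hS) le_rfl, filter_all (subset_Icc_succ hT) le_rfl,
      Finset.card_insert_of_notMem (top_not_mem hS)]
    exact le_trans (dom_card_le hS hT h) (Nat.le_succ _)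

lemma dom_of_insert_left {n : ℕ} {S T : Finset ℕ} (hS : S ⊆ Finset.Icc 1 n)
    (hT : T ⊆ Finset.Icc 1 n) (hc : T.card ≤ S.card)
    (h : Dom (insert (n+1) S) T) : Dom S T := by
  apply dom_of_bounded hS hT
  intro k hk
  have := h k
  rwa [filter_insert_top hk] at this

lemma dom_of_insert_right {n : ℕ} {S T : Finset ℕ}
    (h : Dom S (insert (n+1) T)) : Dom S T := by
  intro k
  exact le_trans (Finset.card_le_card (Finset.filter_subset_filter _
    (Finset.subset_insert _ _))) (h k)

lemma dom_insert_right {n : ℕ} {S T : Finset ℕ} (hS : S ⊆ Finset.Icc 1 (n+1))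
    (hT : T ⊆ Finset.Icc 1 n) (h : Dom S T) (hc : T.card + 1 ≤ S.card) :
    Dom S (insert (n+1) T) := by
  apply dom_of_bounded hS (insert_subset_Icc hT)
  intro k hk
  by_cases hk' : k ≤ n
  · rw [filter_insert_top hk']
    exact h k
  · have hk2 : k = n + 1 := by omega
    subst hk2
    rw [filter_all hS le_rfl, filter_all (insert_subset_Icc hT) le_rfl,
      Finset.card_insert_of_notMem (top_not_mem hT)]
    exact hc

lemma DD_piece_11 (n d : ℕ) :
    ((DD (n+1) d).filter (fun p => n+1 ∈ p.1 ∧ n+1 ∈ p.2)).card = (DD n d).card := by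
  apply Finset.card_nbij' (fun p => (p.1.erase (n+1), p.2.erase (n+1)))
    (fun p => (insert (n+1) p.1, insert (n+1) p.2))
  · intro a ha
    rw [Finset.mem_coe, Finset.mem_filter, mem_DD] at ha
    obtain ⟨⟨hS, hT, hdom, hcard⟩, hm1, hm2⟩ := ha
    rw [Finset.mem_coe, mem_DD]
    dsimp only
    refine ⟨erase_subset_Icc hS, erase_subset_Icc hT, ?_, ?_⟩
    · exact (dom_insert_insert (erase_subset_Icc hS) (erase_subset_Icc hT)).mp
        (by rwa [Finset.insert_erase hm1, Finset.insert_erase hm2])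
    · rw [Finset.card_erase_of_mem hm1, Finset.card_erase_of_mem hm2]
      have h2 : 1 ≤ a.2.card := Finset.card_pos.mpr ⟨n+1, hm2⟩
      omega
  · intro b hb
    rw [Finset.mem_coe, mem_DD] at hb
    obtain ⟨hS, hT, hdom, hcard⟩ := hb
    rw [Finset.mem_coe, Finset.mem_filter, mem_DD]
    dsimp only
    refine ⟨⟨insert_subset_Icc hS, insert_subset_Icc hT,
      (dom_insert_insert hS hT).mpr hdom, ?_⟩, Finset.mem_insert_self _ _,
      Finset.mem_insert_self _ _⟩
    rw [Finset.card_insert_of_notMem (top_not_mem hS),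
      Finset.card_insert_of_notMem (top_not_mem hT)]
    omega
  · intro a ha
    rw [Finset.mem_coe, Finset.mem_filter] at ha
    exact Prod.ext (Finset.insert_erase ha.2.1) (Finset.insert_erase ha.2.2)
  · intro b hb
    rw [Finset.mem_coe, mem_DD] at hb
    exact Prod.ext (Finset.erase_insert (top_not_mem hb.1))
      (Finset.erase_insert (top_not_mem hb.2.1))

lemma DD_piece_10 (n d : ℕ) :
    ((DD (n+1) (d+1)).filter (fun p => n+1 ∈ p.1 ∧ n+1 ∉ p.2)).card = (DD n d).card := by
  apply Finset.card_nbij' (fun p => (p.1.erase (n+1), p.2))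
    (fun p => (insert (n+1) p.1, p.2))
  · intro a ha
    rw [Finset.mem_coe, Finset.mem_filter, mem_DD] at ha
    obtain ⟨⟨hS, hT, hdom, hcard⟩, hm1, hm2⟩ := ha
    have hT' : a.2 ⊆ Finset.Icc 1 n := subset_Icc_of_not_top hT hm2
    have h1 : 1 ≤ a.1.card := Finset.card_pos.mpr ⟨n+1, hm1⟩
    rw [Finset.mem_coe, mem_DD]
    dsimp only
    refine ⟨erase_subset_Icc hS, hT', ?_, ?_⟩
    · refine dom_of_insert_left (erase_subset_Icc hS) hT' ?_
        (by rwa [Finset.insert_erase hm1])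
      rw [Finset.card_erase_of_mem hm1]
      omega
    · rw [Finset.card_erase_of_mem hm1]
      omega
  · intro b hb
    rw [Finset.mem_coe, mem_DD] at hb
    obtain ⟨hS, hT, hdom, hcard⟩ := hb
    rw [Finset.mem_coe, Finset.mem_filter, mem_DD]
    dsimp only
    refine ⟨⟨insert_subset_Icc hS, subset_Icc_succ hT,
      dom_insert_left hS hT hdom, ?_⟩, Finset.mem_insert_self _ _, top_not_mem hT⟩
    rw [Finset.card_insert_of_notMem (top_not_mem hS)]
    omega
  · intro a ha
    rw [Finset.mem_coe, Finset.mem_filter] at ha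
    exact Prod.ext (Finset.insert_erase ha.2.1) rfl
  · intro b hb
    rw [Finset.mem_coe, mem_DD] at hb
    exact Prod.ext (Finset.erase_insert (top_not_mem hb.1)) rfl

lemma DD_piece_10_zero (n : ℕ) :
    ((DD (n+1) 0).filter (fun p => n+1 ∈ p.1 ∧ n+1 ∉ p.2)) = ∅ := by
  rw [Finset.eq_empty_iff_forall_notMem]
  intro a ha
  rw [Finset.mem_filter, mem_DD] at ha
  obtain ⟨⟨hS, hT, hdom, hcard⟩, hm1, hm2⟩ := ha
  have hT' : a.2 ⊆ Finset.Icc 1 n := subset_Icc_of_not_top hT hm2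
  have hE : a.1.erase (n+1) ⊆ Finset.Icc 1 n := erase_subset_Icc hS
  have h1 : 1 ≤ a.1.card := Finset.card_pos.mpr ⟨n+1, hm1⟩
  have hd := hdom n
  rw [filter_all hT' le_rfl] at hd
  have : a.1.filter (· ≤ n) = a.1.erase (n+1) := by
    have := filter_insert_top (T := a.1.erase (n+1)) (n := n) (k := n) le_rfl
    rw [Finset.insert_erase hm1] at this
    rw [this, filter_all hE le_rfl]
  rw [this, Finset.card_erase_of_mem hm1] at hd
  omega

lemma DD_piece_01 (n d : ℕ) :
    ((DD (n+1) d).filter (fun p => n+1 ∉ p.1 ∧ n+1 ∈ p.2)).card = (DD n (d+1)).card := by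
  apply Finset.card_nbij' (fun p => (p.1, p.2.erase (n+1)))
    (fun p => (p.1, insert (n+1) p.2))
  · intro a ha
    rw [Finset.mem_coe, Finset.mem_filter, mem_DD] at ha
    obtain ⟨⟨hS, hT, hdom, hcard⟩, hm1, hm2⟩ := ha
    have hS' : a.1 ⊆ Finset.Icc 1 n := subset_Icc_of_not_top hS hm1
    have h2 : 1 ≤ a.2.card := Finset.card_pos.mpr ⟨n+1, hm2⟩
    rw [Finset.mem_coe, mem_DD]
    dsimp only
    refine ⟨hS', erase_subset_Icc hT, ?_, ?_⟩
    · exact dom_of_insert_right (n := n) (by rwa [Finset.insert_erase hm2])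
    · rw [Finset.card_erase_of_mem hm2]
      omega
  · intro b hb
    rw [Finset.mem_coe, mem_DD] at hb
    obtain ⟨hS, hT, hdom, hcard⟩ := hb
    rw [Finset.mem_coe, Finset.mem_filter, mem_DD]
    dsimp only
    refine ⟨⟨subset_Icc_succ hS, insert_subset_Icc hT,
      dom_insert_right (subset_Icc_succ hS) hT hdom (by omega), ?_⟩,
      top_not_mem hS, Finset.mem_insert_self _ _⟩
    rw [Finset.card_insert_of_notMem (top_not_mem hT)]
    omega
  · intro a ha
    rw [Finset.mem_coe, Finset.mem_filter] at ha
    exact Prod.ext rfl (Finset.insert_erase ha.2.2)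
  · intro b hb
    rw [Finset.mem_coe, mem_DD] at hb
    exact Prod.ext rfl (Finset.erase_insert (top_not_mem hb.2.1))

lemma DD_piece_00 (n d : ℕ) :
    ((DD (n+1) d).filter (fun p => n+1 ∉ p.1 ∧ n+1 ∉ p.2)) = DD n d := by
  ext p
  rw [Finset.mem_filter, mem_DD, mem_DD]
  constructor
  · rintro ⟨⟨hS, hT, hdom, hcard⟩, hm1, hm2⟩
    exact ⟨subset_Icc_of_not_top hS hm1, subset_Icc_of_not_top hT hm2, hdom, hcard⟩
  · rintro ⟨hS, hT, hdom, hcard⟩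
    exact ⟨⟨subset_Icc_succ hS, subset_Icc_succ hT, hdom, hcard⟩,
      top_not_mem hS, top_not_mem hT⟩

lemma DD_split (n d : ℕ) :
    (DD (n+1) d).card =
      ((DD (n+1) d).filter (fun p => n+1 ∈ p.1 ∧ n+1 ∈ p.2)).card
      + ((DD (n+1) d).filter (fun p => n+1 ∈ p.1 ∧ n+1 ∉ p.2)).card
      + ((DD (n+1) d).filter (fun p => n+1 ∉ p.1 ∧ n+1 ∈ p.2)).card
      + ((DD (n+1) d).filter (fun p => n+1 ∉ p.1 ∧ n+1 ∉ p.2)).card := by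
  classical
  have h1 := Finset.card_filter_add_card_filter_not
    (s := DD (n+1) d) (p := fun p => n+1 ∈ p.1)
  have h2 := Finset.card_filter_add_card_filter_not
    (s := (DD (n+1) d).filter (fun p => n+1 ∈ p.1)) (p := fun p => n+1 ∈ p.2)
  have h3 := Finset.card_filter_add_card_filter_not
    (s := (DD (n+1) d).filter (fun p => ¬ n+1 ∈ p.1)) (p := fun p => n+1 ∈ p.2)
  rw [Finset.filter_filter, Finset.filter_filter] at h2 h3
  omega

lemma DD_card (n : ℕ) : ∀ d, (DD n d).card + Nat.choose (2*n) (n+d+2) = Nat.choose (2*n) (n+d) := by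
  induction n with
  | zero =>
    intro d
    have hIcc : Finset.Icc 1 0 = ∅ := Finset.Icc_eq_empty (by omega)
    rcases d with _ | e
    · have : DD 0 0 = {(∅, ∅)} := by
        ext p
        rw [mem_DD]
        simp [hIcc, Finset.subset_empty, Prod.ext_iff]
        intro h1 h2
        constructor
        · intro k
          simp [h1, h2]
        · simp [h1, h2]
      rw [this]
      simp
    · have : DD 0 (e+1) = ∅ := by
        rw [Finset.eq_empty_iff_forall_notMem]
        intro p hp
        rw [mem_DD] at hp
        obtain ⟨h1, h2, _, h4⟩ := hp
        rw [hIcc, Finset.subset_empty] at h1 h2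
        rw [h1, h2] at h4
        simp at h4
      rw [this]
      simp
  | succ n ih =>
    intro d
    have hsplit := DD_split n d
    have h11 := DD_piece_11 n d
    have h00 := DD_piece_00 n d
    have h01 := DD_piece_01 n d
    have pas : ∀ a b : ℕ, Nat.choose (a+1) (b+1) = Nat.choose a b + Nat.choose a (b+1) :=
      fun a b => Nat.choose_succ_succ a b
    rcases d with _ | e
    · have h10 := DD_piece_10_zero n
      rw [h10] at hsplit
      simp only [Finset.card_empty] at hsplit
      rw [h11, h01, h00] at hsplit
      rw [show (0:ℕ)+1 = 1 from rfl] at hsplit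
      -- goal : (DD (n+1) 0).card + C(2(n+1), n+1+0+2) = C(2(n+1), n+1+0)
      rw [show 2*(n+1) = 2*n+1+1 by ring, show n+1+0+2 = n+2+1 by ring,
        show n+1+0 = n+1 by ring]
      have ih0 := ih 0
      have ih1 := ih 1
      rw [show n+0+2 = n+2 by ring, show n+0 = n by ring] at ih0
      rw [show n+1+2 = n+3 by ring] at ih1
      have p1 : Nat.choose (2*n+1+1) (n+1) = Nat.choose (2*n+1) n + Nat.choose (2*n+1) (n+1) := by
        rw [show n+1 = n+1 by rfl]; exact pas (2*n+1) n
      have p2 : Nat.choose (2*n+1) (n+1) = Nat.choose (2*n) n + Nat.choose (2*n) (n+1) :=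
        pas (2*n) n
      have p3 : Nat.choose (2*n+1) n = Nat.choose (2*n+1) (n+1) := by
        have := Nat.choose_symm (n := 2*n+1) (k := n) (by omega)
        rw [show 2*n+1-n = n+1 by omega] at this
        exact this.symm
      have p4 : Nat.choose (2*n+1+1) (n+2+1) = Nat.choose (2*n+1) (n+2) + Nat.choose (2*n+1) (n+3) :=
        pas (2*n+1) (n+2)
      have p5 : Nat.choose (2*n+1) (n+2) = Nat.choose (2*n) (n+1) + Nat.choose (2*n) (n+2) :=
        pas (2*n) (n+1)
      have p6 : Nat.choose (2*n+1) (n+3) = Nat.choose (2*n) (n+2) + Nat.choose (2*n) (n+3) :=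
        pas (2*n) (n+2)
      omega
    · have h10 := DD_piece_10 n e
      rw [h11, h10, h01, h00] at hsplit
      rw [show e+1+1 = e+2 from rfl] at hsplit
      rw [show 2*(n+1) = 2*n+1+1 by ring, show n+1+(e+1)+2 = n+e+3+1 by ring,
        show n+1+(e+1) = n+e+1+1 by ring]
      have ihe := ih e
      have ih1 := ih (e+1)
      have ih2 := ih (e+2)
      rw [show n+e+2 = n+e+2 by rfl] at ihe
      rw [show n+(e+1)+2 = n+e+3 by ring, show n+(e+1) = n+e+1 by ring] at ih1
      rw [show n+(e+2)+2 = n+e+4 by ring, show n+(e+2) = n+e+2 by ring] at ih2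
      have p1 : Nat.choose (2*n+1+1) (n+e+1+1) = Nat.choose (2*n+1) (n+e+1) + Nat.choose (2*n+1) (n+e+2) := by
        have := pas (2*n+1) (n+e+1)
        rwa [show n+e+1+1 = n+e+2 by ring] at this
      have p2 : Nat.choose (2*n+1) (n+e+1) = Nat.choose (2*n) (n+e) + Nat.choose (2*n) (n+e+1) := by
        have := pas (2*n) (n+e)
        rwa [show n+e+1 = n+e+1 by rfl] at this
      have p3 : Nat.choose (2*n+1) (n+e+2) = Nat.choose (2*n) (n+e+1) + Nat.choose (2*n) (n+e+2) := by
        have := pas (2*n) (n+e+1)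
        rwa [show n+e+1+1 = n+e+2 by ring] at this
      have p4 : Nat.choose (2*n+1+1) (n+e+3+1) = Nat.choose (2*n+1) (n+e+3) + Nat.choose (2*n+1) (n+e+4) := by
        have := pas (2*n+1) (n+e+3)
        rwa [show n+e+3+1 = n+e+4 by ring] at this
      have p5 : Nat.choose (2*n+1) (n+e+3) = Nat.choose (2*n) (n+e+2) + Nat.choose (2*n) (n+e+3) := by
        have := pas (2*n) (n+e+2)
        rwa [show n+e+2+1 = n+e+3 by ring] at this
      have p6 : Nat.choose (2*n+1) (n+e+4) = Nat.choose (2*n) (n+e+3) + Nat.choose (2*n) (n+e+4) := by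
        have := pas (2*n) (n+e+3)
        rwa [show n+e+3+1 = n+e+4 by ring] at this
      omega

open scoped Classical in
noncomputable def TotD (n : ℕ) : Finset (Finset ℕ × Finset ℕ) :=
  ((Finset.Icc 1 n).powerset ×ˢ (Finset.Icc 1 n).powerset).filter (fun p => Dom p.1 p.2)

lemma mem_TotD {n : ℕ} {p : Finset ℕ × Finset ℕ} :
    p ∈ TotD n ↔ p.1 ⊆ Finset.Icc 1 n ∧ p.2 ⊆ Finset.Icc 1 n ∧ Dom p.1 p.2 := by
  simp [TotD, Finset.mem_filter, Finset.mem_product, Finset.mem_powerset, and_assoc]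

lemma TotD_eq (n : ℕ) : TotD n = (Finset.range (n+1)).biUnion (fun d => DD n d) := by
  ext p
  simp only [Finset.mem_biUnion, Finset.mem_range]
  rw [mem_TotD]
  constructor
  · rintro ⟨hS, hT, hdom⟩
    have hcard : p.2.card ≤ p.1.card := dom_card_le hS hT hdom
    have h1 : p.1.card ≤ n := by
      have := Finset.card_le_card hS
      rwa [Nat.card_Icc, Nat.add_sub_cancel] at this
    exact ⟨p.1.card - p.2.card, by omega, mem_DD.mpr ⟨hS, hT, hdom, by omega⟩⟩
  · rintro ⟨d, _, hd⟩
    rw [mem_DD] at hd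
    exact ⟨hd.1, hd.2.1, hd.2.2.1⟩

lemma TotD_card (n : ℕ) : (TotD n).card = Nat.choose (2*n+1) n := by
  have hdisj : ∀ i ∈ Finset.range (n+1), ∀ j ∈ Finset.range (n+1), i ≠ j →
      Disjoint (DD n i) (DD n j) := by
    intro i _ j _ hij
    rw [Finset.disjoint_left]
    intro p hp hq
    rw [mem_DD] at hp hq
    exact hij (by omega)
  have hbi : (TotD n).card = ∑ d ∈ Finset.range (n+1), (DD n d).card := by
    rw [TotD_eq, Finset.card_biUnion hdisj]
  set g : ℕ → ℕ := fun d => Nat.choose (2*n) (n+d) with hg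
  have key : ∀ d, (DD n d).card + g (d+2) = g d := by
    intro d
    have := DD_card n d
    simp only [hg]
    rw [show n+(d+2) = n+d+2 by omega]
    exact this
  have h2 : ∑ d ∈ Finset.range (n+1), (DD n d).card + ∑ d ∈ Finset.range (n+1), g (d+2)
      = ∑ d ∈ Finset.range (n+1), g d := by
    rw [← Finset.sum_add_distrib]
    exact Finset.sum_congr rfl fun d _ => key d
  have h3 : ∑ d ∈ Finset.range (n+3), g d
      = ∑ d ∈ Finset.range (n+1), g (d+2) + g 1 + g 0 := by
    rw [show n+3 = n+2+1 from rfl, Finset.sum_range_succ' g (n+2),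
      Finset.sum_range_succ' (fun d => g (d+1)) (n+1)]
    try simp only [show ∀ d : ℕ, d+1+1 = d+2 from fun d => rfl]
    try ring
  have h4 : ∑ d ∈ Finset.range (n+3), g d
      = ∑ d ∈ Finset.range (n+1), g d + g (n+1) + g (n+2) := by
    rw [show n+3 = n+2+1 from rfl, Finset.sum_range_succ g (n+2),
      show n+2 = n+1+1 from rfl, Finset.sum_range_succ g (n+1)]
  have h5 : g (n+1) = 0 := by
    simp only [hg]
    exact Nat.choose_eq_zero_of_lt (by omega)
  have h6 : g (n+2) = 0 := by
    simp only [hg]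
    exact Nat.choose_eq_zero_of_lt (by omega)
  have hcard : (TotD n).card = g 0 + g 1 := by omega
  have hg0 : g 0 = Nat.choose (2*n) n := by simp only [hg]; norm_num
  have hg1 : g 1 = Nat.choose (2*n) (n+1) := by simp only [hg]
  have pas : Nat.choose (2*n+1) (n+1) = Nat.choose (2*n) n + Nat.choose (2*n) (n+1) :=
    Nat.choose_succ_succ (2*n) n
  have psym : Nat.choose (2*n+1) n = Nat.choose (2*n+1) (n+1) := by
    have := Nat.choose_symm (n := 2*n+1) (k := n) (by omega)
    rw [show 2*n+1-n = n+1 by omega] at this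
    exact this.symm
  omega

open scoped Classical in
noncomputable def TotNE (n : ℕ) : Finset (Finset ℕ × Finset ℕ) :=
  (TotD n).filter (fun p => p.2 ≠ ∅)

lemma TotNE_card (n : ℕ) : (TotNE n).card + 2^n = Nat.choose (2*n+1) n := by
  classical
  have hsplit := Finset.card_filter_add_card_filter_not
    (s := TotD n) (p := fun p => p.2 ≠ ∅)
  have hemp : ((TotD n).filter (fun p => ¬ p.2 ≠ ∅)).card
      = (Finset.Icc 1 n).powerset.card := by
    apply Finset.card_nbij' (fun p => p.1) (fun S => (S, ∅))
    · intro a ha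
      rw [Finset.mem_coe, Finset.mem_filter, mem_TotD] at ha
      exact Finset.mem_powerset.mpr ha.1.1
    · intro S hS
      rw [Finset.mem_coe, Finset.mem_filter, mem_TotD]
      refine ⟨⟨Finset.mem_powerset.mp hS, Finset.empty_subset _, fun k => ?_⟩, by simp⟩
      simp
    · intro a ha
      rw [Finset.mem_coe, Finset.mem_filter] at ha
      have : a.2 = ∅ := by tauto
      exact Prod.ext rfl this.symm
    · intro S _
      rfl
  rw [Finset.card_powerset, Nat.card_Icc, Nat.add_sub_cancel] at hemp
  have := TotD_card n
  rw [TotNE] at *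
  omega


lemma prod_ratio_one (n : ℕ) : ∀ m : ℕ,
    ∏ i ∈ Finset.Icc 1 m, (((i:ℚ) + n + 1)/((i:ℚ) + n)) = ((m:ℚ) + n + 1)/((n:ℚ) + 1) := by
  intro m
  induction m with
  | zero =>
    simp
    rw [div_self (show ((n:ℚ) + 1) ≠ 0 by positivity)]
  | succ m ih =>
    rw [Finset.prod_Icc_succ_top (by omega), ih]
    have h1 : ((n:ℚ) + 1) ≠ 0 := by positivity
    have h2 : ((m:ℚ) + n + 1) ≠ 0 := by positivity
    push_cast
    field_simp
    ring

lemma prod_ratio_two (n : ℕ) : ∀ m : ℕ,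
    ∏ i ∈ Finset.Icc 1 m, (((i:ℚ) + n + 2)/((i:ℚ) + n))
      = (((m:ℚ) + n + 1) * ((m:ℚ) + n + 2))/(((n:ℚ) + 1) * ((n:ℚ) + 2)) := by
  intro m
  induction m with
  | zero =>
    have h1 : ((n:ℚ) + 1) ≠ 0 := by positivity
    have h2 : ((n:ℚ) + 2) ≠ 0 := by positivity
    simp
    rw [div_self (by positivity)]
  | succ m ih =>
    rw [Finset.prod_Icc_succ_top (by omega), ih]
    have h1 : ((n:ℚ) + 1) ≠ 0 := by positivity
    have h2 : ((n:ℚ) + 2) ≠ 0 := by positivity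
    have h3 : ((m:ℚ) + n + 1) ≠ 0 := by positivity
    push_cast
    field_simp
    ring

lemma gordon_succ (n q : ℕ) : gordon (n+1) q
    = gordon n q * ∏ i ∈ Finset.Icc 1 (n+1),
        (((q:ℚ) + i + ((n+1:ℕ):ℚ) - 1)/((i:ℚ) + ((n+1:ℕ):ℚ) - 1)) := by
  rw [gordon, gordon]
  have hinj : Set.InjOn (fun i : ℕ => (i, n+1)) (Finset.Icc 1 (n+1)) := by
    intro a _ b _ h
    simpa [Prod.ext_iff] using h
  have hdisj : Disjoint ((Finset.Icc 1 n ×ˢ Finset.Icc 1 n).filter (fun p => p.1 ≤ p.2))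
      ((Finset.Icc 1 (n+1)).image (fun i => (i, n+1))) := by
    rw [Finset.disjoint_left]
    intro p hp hq
    rw [Finset.mem_filter, Finset.mem_product, Finset.mem_Icc, Finset.mem_Icc] at hp
    rw [Finset.mem_image] at hq
    obtain ⟨i, _, hi⟩ := hq
    have : p.2 = n+1 := by rw [← hi]
    omega
  have hI : (Finset.Icc 1 (n+1) ×ˢ Finset.Icc 1 (n+1)).filter (fun p => p.1 ≤ p.2)
      = (Finset.Icc 1 n ×ˢ Finset.Icc 1 n).filter (fun p => p.1 ≤ p.2)
        ∪ (Finset.Icc 1 (n+1)).image (fun i => (i, n+1)) := by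
    ext p
    rw [Finset.mem_union, Finset.mem_filter, Finset.mem_filter, Finset.mem_product,
      Finset.mem_product, Finset.mem_image]
    simp only [Finset.mem_Icc]
    constructor
    · rintro ⟨⟨⟨h1, h2⟩, h3, h4⟩, h5⟩
      by_cases hp : p.2 = n+1
      · exact Or.inr ⟨p.1, ⟨h1, h2⟩, by rw [← hp]⟩
      · exact Or.inl ⟨⟨⟨h1, by omega⟩, h3, by omega⟩, h5⟩
    · rintro (⟨⟨⟨h1, h2⟩, h3, h4⟩, h5⟩ | ⟨i, ⟨hi1, hi2⟩, hi⟩)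
      · exact ⟨⟨⟨h1, by omega⟩, h3, by omega⟩, h5⟩
      · have e1 : p.1 = i := by rw [← hi]
        have e2 : p.2 = n+1 := by rw [← hi]
        exact ⟨⟨⟨by omega, by omega⟩, by omega, by omega⟩, by omega⟩
  rw [hI, Finset.prod_union hdisj, Finset.prod_image (fun a ha b hb h => hinj ha hb h)]

lemma gordon_zero (q : ℕ) : gordon 0 q = 1 := by
  rw [gordon]
  rw [show Finset.Icc 1 0 = (∅ : Finset ℕ) from Finset.Icc_eq_empty (by omega)]
  simp

lemma gordon_one (n : ℕ) : gordon n 1 = 2^n := by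
  induction n with
  | zero => simp [gordon_zero]
  | succ n ih =>
    rw [gordon_succ, ih]
    have : ∏ i ∈ Finset.Icc 1 (n+1),
        (((1:ℕ):ℚ) + i + ((n+1:ℕ):ℚ) - 1)/((i:ℚ) + ((n+1:ℕ):ℚ) - 1)
        = ∏ i ∈ Finset.Icc 1 (n+1), (((i:ℚ) + n + 1)/((i:ℚ) + n)) := by
      apply Finset.prod_congr rfl
      intro i _
      push_cast
      ring_nf
    rw [this, prod_ratio_one n (n+1)]
    have h1 : ((n:ℚ) + 1) ≠ 0 := by positivity
    push_cast
    field_simp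
    ring

lemma choose_step (n : ℕ) :
    Nat.choose (2*n+3) (n+1) * ((n+1)*(n+2)) = Nat.choose (2*n+1) n * ((2*n+2)*(2*n+3)) := by
  have A := Nat.add_one_mul_choose_eq (2*n+1) n
  have B := Nat.add_one_mul_choose_eq (2*n+2) (n+1)
  have C : Nat.choose (2*n+3) (n+2) = Nat.choose (2*n+3) (n+1) := by
    have := Nat.choose_symm (n := 2*n+3) (k := n+2) (by omega)
    rw [show 2*n+3-(n+2) = n+1 by omega] at this
    exact this.symm
  rw [show 2*n+1+1 = 2*n+2 by omega] at A
  rw [show 2*n+2+1 = 2*n+3 by omega] at B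
  rw [show n+1+1 = n+2 by omega] at B
  rw [C] at B
  nlinarith [A, B]

lemma gordon_two (n : ℕ) : gordon n 2 = Nat.choose (2*n+1) n := by
  induction n with
  | zero => simp [gordon_zero]
  | succ n ih =>
    rw [gordon_succ, ih]
    have : ∏ i ∈ Finset.Icc 1 (n+1),
        (((2:ℕ):ℚ) + i + ((n+1:ℕ):ℚ) - 1)/((i:ℚ) + ((n+1:ℕ):ℚ) - 1)
        = ∏ i ∈ Finset.Icc 1 (n+1), (((i:ℚ) + n + 2)/((i:ℚ) + n)) := by
      apply Finset.prod_congr rfl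
      intro i _
      push_cast
      ring_nf
    rw [this, prod_ratio_two n (n+1)]
    have key := choose_step n
    have keyQ : (Nat.choose (2*n+3) (n+1) : ℚ) * (((n:ℚ)+1)*((n:ℚ)+2))
        = (Nat.choose (2*n+1) n : ℚ) * ((2*(n:ℚ)+2)*(2*(n:ℚ)+3)) := by
      have := congrArg (fun x : ℕ => (x : ℚ)) key
      push_cast at this
      convert this using 2 <;> push_cast <;> ring
    have h1 : ((n:ℚ) + 1) ≠ 0 := by positivity
    have h2 : ((n:ℚ) + 2) ≠ 0 := by positivity
    rw [show 2*(n+1)+1 = 2*n+3 by omega]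
    push_cast
    field_simp
    linear_combination -keyQ



def colList (S : Finset ℕ) : List ℕ := (S.sort (· ≤ ·)).reverse

lemma colList_toFinset (S : Finset ℕ) : (colList S).toFinset = S := by
  rw [colList, List.toFinset_reverse, Finset.sort_toFinset]

lemma colList_injective : Function.Injective colList := by
  intro S T h
  rw [← colList_toFinset S, ← colList_toFinset T, h]

lemma colList_reverse (S : Finset ℕ) : (colList S).reverse = S.sort (· ≤ ·) := by
  rw [colList, List.reverse_reverse]

lemma isColumn_iff {n : ℕ} {w : List ℕ} :
    IsColumn n w ↔ ∃ S : Finset ℕ, S ⊆ Finset.Icc 1 n ∧ S ≠ ∅ ∧ w = colList S := by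
  constructor
  · rintro ⟨hne, hchain, hmem⟩
    refine ⟨w.toFinset, ?_, ?_, ?_⟩
    · intro x hx
      rw [List.mem_toFinset] at hx
      exact Finset.mem_Icc.mpr (hmem x hx)
    · obtain ⟨x, hx⟩ := List.exists_mem_of_ne_nil w hne
      exact Finset.ne_empty_of_mem (List.mem_toFinset.mpr hx)
    · have hrev : w.reverse.Chain' (· < ·) := by
        rw [List.Chain', List.isChain_reverse]
        exact hchain
      have hsorted : w.reverse.Pairwise (· < ·) := by
        rwa [← List.isChain_iff_pairwise]
      have hnodup : w.reverse.Nodup := hsorted.nodup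
      have hsle : w.reverse.Pairwise (· ≤ ·) := hsorted.imp le_of_lt
      have : w.reverse.toFinset.sort (· ≤ ·) = w.reverse := by
        rw [List.toFinset_sort _ hnodup]
        exact hsle
      rw [colList, List.toFinset_reverse] at *
      rw [this]
      rw [List.reverse_reverse]
  · rintro ⟨S, hsub, hne, rfl⟩
    have hS : S.Nonempty := Finset.nonempty_iff_ne_empty.mpr hne
    refine ⟨?_, ?_, ?_⟩
    · intro h
      have : (S.sort (· ≤ ·)).length = 0 := by
        rw [← List.length_reverse, ← colList, h]
        rfl
      rw [Finset.length_sort] at this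
      exact hne (Finset.card_eq_zero.mp this)
    · rw [colList, List.Chain', List.isChain_reverse]
      have := (Finset.sortedLT_sort S).pairwise
      rw [← List.isChain_iff_pairwise] at this
      exact this.imp (fun _ _ h => h)
    · intro x hx
      rw [colList, List.mem_reverse, Finset.mem_sort] at hx
      exact Finset.mem_Icc.mp (hsub hx)

lemma tabPair_iff (S T : Finset ℕ) : TabPair (colList S) (colList T) ↔ Dom S T := by
  have hlS : (colList S).length = S.card := by
    rw [colList, List.length_reverse, Finset.length_sort]
  have hlT : (colList T).length = T.card := by
    rw [colList, List.length_reverse, Finset.length_sort]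
  unfold TabPair
  rw [colList_reverse, colList_reverse, hlS, hlT]
  exact tab_iff_dom S T

/-- The number of 2-cells of the column presentation of `P_n`, i.e. of pairs of
columns that do not form a tableau configuration, is
`(2^n - 1)^2 - (T_2(n) - T_1(n))`; equivalently, the number of pairs of columns
forming a tableau configuration is `T_2(n) - T_1(n)`. -/
theorem card_column_two_cells (n : ℕ) (hn : 0 < n) :
    ({p : List ℕ × List ℕ | IsColumn n p.1 ∧ IsColumn n p.2 ∧ ¬ TabPair p.1 p.2}.ncard : ℚ)
      = ((2 : ℚ) ^ n - 1) ^ 2 - (gordon n 2 - gordon n 1) ∧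
    ({p : List ℕ × List ℕ | IsColumn n p.1 ∧ IsColumn n p.2 ∧ TabPair p.1 p.2}.ncard : ℚ)
      = gordon n 2 - gordon n 1 := by
  classical
  set P : Finset (Finset ℕ × Finset ℕ) :=
    ((Finset.Icc 1 n).powerset.filter (fun S => S ≠ ∅))
      ×ˢ ((Finset.Icc 1 n).powerset.filter (fun S => S ≠ ∅)) with hP
  set f : Finset ℕ × Finset ℕ → List ℕ × List ℕ :=
    fun p => (colList p.1, colList p.2) with hf
  have hfinj : Function.Injective f := by
    intro p q h
    rw [Prod.ext_iff] at h ⊢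
    exact ⟨colList_injective h.1, colList_injective h.2⟩
  have memP : ∀ p : Finset ℕ × Finset ℕ, p ∈ P ↔
      (p.1 ⊆ Finset.Icc 1 n ∧ p.1 ≠ ∅) ∧ (p.2 ⊆ Finset.Icc 1 n ∧ p.2 ≠ ∅) := by
    intro p
    simp [hP, Finset.mem_product, Finset.mem_filter, Finset.mem_powerset, and_assoc]
  have hset : ∀ Q : List ℕ × List ℕ → Prop, (∀ u v, Q (colList u, colList v) ↔ Dom u v) →
      {p : List ℕ × List ℕ | IsColumn n p.1 ∧ IsColumn n p.2 ∧ Q p}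
        = ↑((P.filter (fun p => Dom p.1 p.2)).image f) := by
    intro Q hQ
    ext p
    simp only [Set.mem_setOf_eq, Finset.coe_image, Set.mem_image, Finset.mem_coe,
      Finset.mem_filter]
    constructor
    · rintro ⟨h1, h2, h3⟩
      obtain ⟨S, hS1, hS2, hS3⟩ := isColumn_iff.mp h1
      obtain ⟨T, hT1, hT2, hT3⟩ := isColumn_iff.mp h2
      have hpe : p = f (S, T) := by
        rw [hf]
        exact Prod.ext hS3 hT3
      refine ⟨(S, T), ⟨memP (S, T) |>.mpr ⟨⟨hS1, hS2⟩, ⟨hT1, hT2⟩⟩, ?_⟩, hpe.symm⟩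
      have := hQ S T
      rw [← this]
      rw [hpe] at h3
      exact h3
    · rintro ⟨q, ⟨hqP, hqD⟩, rfl⟩
      obtain ⟨⟨hS1, hS2⟩, hT1, hT2⟩ := (memP q).mp hqP
      exact ⟨isColumn_iff.mpr ⟨q.1, hS1, hS2, rfl⟩,
        isColumn_iff.mpr ⟨q.2, hT1, hT2, rfl⟩, (hQ q.1 q.2).mpr hqD⟩
  have hsetNot : {p : List ℕ × List ℕ | IsColumn n p.1 ∧ IsColumn n p.2 ∧ ¬ TabPair p.1 p.2}
      = ↑((P.filter (fun p => ¬ Dom p.1 p.2)).image f) := by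
    ext p
    simp only [Set.mem_setOf_eq, Finset.coe_image, Set.mem_image, Finset.mem_coe,
      Finset.mem_filter]
    constructor
    · rintro ⟨h1, h2, h3⟩
      obtain ⟨S, hS1, hS2, hS3⟩ := isColumn_iff.mp h1
      obtain ⟨T, hT1, hT2, hT3⟩ := isColumn_iff.mp h2
      have hpe : p = f (S, T) := by
        rw [hf]
        exact Prod.ext hS3 hT3
      refine ⟨(S, T), ⟨memP (S, T) |>.mpr ⟨⟨hS1, hS2⟩, ⟨hT1, hT2⟩⟩, ?_⟩, hpe.symm⟩
      rw [hpe] at h3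
      intro hd
      exact h3 ((tabPair_iff S T).mpr hd)
    · rintro ⟨q, ⟨hqP, hqD⟩, rfl⟩
      obtain ⟨⟨hS1, hS2⟩, hT1, hT2⟩ := (memP q).mp hqP
      exact ⟨isColumn_iff.mpr ⟨q.1, hS1, hS2, rfl⟩,
        isColumn_iff.mpr ⟨q.2, hT1, hT2, rfl⟩,
        fun ht => hqD ((tabPair_iff q.1 q.2).mp ht)⟩
  have hsetTab := hset (fun p => TabPair p.1 p.2) (fun u v => tabPair_iff u v)
  have hcardTab : {p : List ℕ × List ℕ | IsColumn n p.1 ∧ IsColumn n p.2 ∧ TabPair p.1 p.2}.ncard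
      = (P.filter (fun p => Dom p.1 p.2)).card := by
    rw [hsetTab, Set.ncard_coe_finset, Finset.card_image_of_injective _ hfinj]
  have hcardNot : {p : List ℕ × List ℕ | IsColumn n p.1 ∧ IsColumn n p.2 ∧ ¬ TabPair p.1 p.2}.ncard
      = (P.filter (fun p => ¬ Dom p.1 p.2)).card := by
    rw [hsetNot, Set.ncard_coe_finset, Finset.card_image_of_injective _ hfinj]
  have hPD : P.filter (fun p => Dom p.1 p.2) = TotNE n := by
    ext p
    rw [Finset.mem_filter, TotNE, Finset.mem_filter, mem_TotD]
    constructor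
    · rintro ⟨hp, hd⟩
      obtain ⟨⟨hS1, hS2⟩, hT1, hT2⟩ := (memP p).mp hp
      exact ⟨⟨hS1, hT1, hd⟩, hT2⟩
    · rintro ⟨⟨hS1, hT1, hd⟩, hT2⟩
      have hcle : p.2.card ≤ p.1.card := dom_card_le hS1 hT1 hd
      have hT2' : 0 < p.2.card := Finset.card_pos.mpr (Finset.nonempty_iff_ne_empty.mpr hT2)
      have hS2 : p.1 ≠ ∅ := by
        intro he
        rw [he, Finset.card_empty] at hcle
        omega
      exact ⟨(memP p).mpr ⟨⟨hS1, hS2⟩, hT1, hT2⟩, hd⟩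
  have hsplitP := Finset.card_filter_add_card_filter_not
    (s := P) (p := fun p => Dom p.1 p.2)
  beta_reduce at hsplitP
  have hcardP : P.card = (2^n - 1) * (2^n - 1) := by
    rw [hP, Finset.card_product]
    have h1 : (Finset.Icc 1 n).powerset.filter (fun S => S ≠ ∅)
        = (Finset.Icc 1 n).powerset.erase ∅ := by
      ext S
      rw [Finset.mem_filter, Finset.mem_erase]
      tauto
    rw [h1, Finset.card_erase_of_mem (Finset.empty_mem_powerset _), Finset.card_powerset,
      Nat.card_Icc, Nat.add_sub_cancel]
  have htot := TotNE_card n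
  have h2n : (1:ℕ) ≤ 2^n := Nat.one_le_two_pow
  have hg : gordon n 2 - gordon n 1 = ((TotNE n).card : ℚ) := by
    rw [gordon_two, gordon_one]
    have : ((TotNE n).card : ℚ) + 2^n = (Nat.choose (2*n+1) n : ℚ) := by
      rw [← htot]
      push_cast
      ring
    linarith
  constructor
  · rw [hcardNot, hg]
    have hsum : (P.filter (fun p => ¬ Dom p.1 p.2)).card + (TotNE n).card
        = (2^n - 1) * (2^n - 1) := by
      rw [← hPD, ← hcardP]
      omega
    have hcast : ((P.filter (fun p => ¬ Dom p.1 p.2)).card : ℚ) + ((TotNE n).card : ℚ)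
        = ((2:ℚ)^n - 1) * ((2:ℚ)^n - 1) := by
      have := congrArg (fun x : ℕ => (x : ℚ)) hsum
      push_cast [h2n] at this
      convert this using 2
    rw [sq]
    linarith
  · rw [hcardTab, hPD, hg]
end
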